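/- arXiv:1005.1521 — 3 statements merged into one kernel-verified Lean document; each statement's English description precedes it below -/
import Mathlib

section
/- The number of Dyck paths of length 2n with exactly v+1 peaks equals the Narayana number N(n,v) = (1/(v+1)) * C(n,v) * C(n-1,v), for 0 ≤ v ≤ n-1 and n ≥ 1. -/
open Finset
open scoped Classical

/-- Extend a finite step sequence to ℕ (false outside range). -/
def extS {m : ℕ} (s : Fin m → Bool) : ℕ → Bool :=
  fun j => if h : j < m then s ⟨j, h⟩ else false

/-- Number of up-steps (true entries) among the first `k` steps. -/
def upsTo {m : ℕ} (s : Fin m → Bool) (k : ℕ) : ℕ :=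
  ((Finset.range k).filter (fun j => extS s j = true)).card

/-- A bilateral Dyck path of length 2n: a ±1-sequence with sum 0,
encoded as a Bool sequence with exactly n `true`s. -/
def isBilateral (n : ℕ) (s : Fin (2*n) → Bool) : Prop := upsTo s (2*n) = n

/-- A Dyck path of length 2n: sum 0 and all partial sums nonnegative
(`k ≤ 2 * upsTo s k` says #ups ≥ #downs among the first k steps). -/
def isDyck (n : ℕ) (s : Fin (2*n) → Bool) : Prop :=
  upsTo s (2*n) = n ∧ ∀ k ≤ 2*n, k ≤ 2 * upsTo s k

/-- Interior peaks: 1-indexed positions i (1 ≤ i ≤ m-1) with step i up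
and step i+1 down; 0-indexed j = i-1 ranges over `range (m-1)`. -/
def interiorPeaks {m : ℕ} (s : Fin m → Bool) : ℕ :=
  ((Finset.range (m-1)).filter (fun j => extS s j = true ∧ extS s (j+1) = false)).card

/-- Peaks with the boundary convention: the initial vertex is a peak if the
first step is down, the final vertex is a peak if the last step is up. -/
def bPeaks (n : ℕ) (s : Fin (2*n) → Bool) : ℕ :=
  interiorPeaks s + (if extS s 0 = false then 1 else 0)
    + (if extS s (2*n-1) = true then 1 else 0)

/-- Number of up-steps at even 1-indexed positions (odd 0-indexed). -/
def evenUps (n : ℕ) (s : Fin (2*n) → Bool) : ℕ :=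
  ((Finset.range (2*n)).filter (fun j => j % 2 = 1 ∧ extS s j = true)).card

/-- Number of up-steps at odd 1-indexed positions (even 0-indexed). -/
def oddUps (n : ℕ) (s : Fin (2*n) → Bool) : ℕ :=
  ((Finset.range (2*n)).filter (fun j => j % 2 = 0 ∧ extS s j = true)).card

/-- Number of ones (arrows) in a Boolean sequence. -/
def ones {m : ℕ} (f : Fin m → Bool) : ℕ := upsTo f m

/-- 1-indexed position of the h-th one in `f`: the least `k` such that the
first `k` entries contain exactly `h` ones. -/
noncomputable def nthOnePos {m : ℕ} (f : Fin m → Bool) (h : ℕ) : ℕ := sInf {k | upsTo f k = h}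

/-- A checkmark pair of size n. -/
def isCheckPair (n : ℕ) (p : (Fin n → Bool) × (Fin (n-1) → Bool)) : Prop :=
  ones p.1 = ones p.2 ∨ ones p.1 = ones p.2 + 1

/-- A Dyck checkmark pair of size n. -/
def isDyckCheckPair (n : ℕ) (p : (Fin n → Bool) × (Fin (n-1) → Bool)) : Prop :=
  isCheckPair n p ∧ ∀ h, 1 ≤ h → h ≤ ones p.2 → nthOnePos p.2 h < nthOnePos p.1 h

/-- Narayana number N(n,v) = C(n,v)C(n-1,v)/(v+1). -/
def narayana (n v : ℕ) : ℕ := n.choose v * (n-1).choose v / (v + 1)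

/-- The bijection φ: s_NW(i) = 1 iff step 2i-1 (1-indexed) is down;
s_SW(i) = 1 iff step 2i (1-indexed) is up. -/
def phiMap (n : ℕ) (s : Fin (2*n) → Bool) : (Fin n → Bool) × (Fin (n-1) → Bool) :=
  (fun i => ! extS s (2*(i:ℕ)), fun i => extS s (2*(i:ℕ)+1))

/-- Height (#ups − #downs) before step j (0-indexed). -/
def height {m : ℕ} (s : Fin m → Bool) (j : ℕ) : ℤ := 2 * (upsTo s j : ℤ) - j

/-- Step j lies in an odd band: an up-step from even height, or a down-step
from odd height. -/
def inOddBand {m : ℕ} (s : Fin m → Bool) (j : ℕ) : Prop :=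
  (extS s j = true ∧ Even (height s j)) ∨ (extS s j = false ∧ Odd (height s j))
section Toolbox
variable {M : ℕ}

lemma upsTo_zero (s : Fin M → Bool) : upsTo s 0 = 0 := by
  simp [upsTo]

lemma upsTo_succ (s : Fin M → Bool) (k : ℕ) :
    upsTo s (k+1) = upsTo s k + (if extS s k = true then 1 else 0) := by
  unfold upsTo
  rw [Finset.range_add_one, Finset.filter_insert]
  split
  · rw [Finset.card_insert_of_notMem (by simp)]
  · simp

lemma upsTo_mono (s : Fin M → Bool) {k l : ℕ} (h : k ≤ l) : upsTo s k ≤ upsTo s l :=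
  Finset.card_le_card (Finset.filter_subset_filter _ (by simpa using Finset.range_subset_range.2 h))

lemma upsTo_succ_le (s : Fin M → Bool) (k : ℕ) : upsTo s (k+1) ≤ upsTo s k + 1 := by
  rw [upsTo_succ]; split <;> omega

lemma upsTo_le_self (s : Fin M → Bool) (k : ℕ) : upsTo s k ≤ k := by
  simpa [upsTo] using (Finset.card_filter_le (Finset.range k) _)

lemma extS_eq_false_of_ge (s : Fin M → Bool) {j : ℕ} (h : M ≤ j) : extS s j = false := by
  simp [extS]; omega

lemma upsTo_cap (s : Fin M → Bool) {k : ℕ} (h : M ≤ k) : upsTo s k = ones s := by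
  unfold upsTo ones upsTo
  congr 1
  apply Finset.ext
  intro j
  simp only [Finset.mem_filter, Finset.mem_range]
  constructor
  · rintro ⟨hj, hs⟩
    refine ⟨?_, hs⟩
    by_contra hM
    rw [extS_eq_false_of_ge s (by omega)] at hs
    exact absurd hs (by simp)
  · rintro ⟨hj, hs⟩; exact ⟨by omega, hs⟩

lemma upsTo_le_ones (s : Fin M → Bool) (k : ℕ) : upsTo s k ≤ ones s := by
  rcases le_or_gt M k with h | h
  · exact le_of_eq (upsTo_cap s h)
  · exact (upsTo_mono s h.le).trans (le_of_eq (upsTo_cap s le_rfl))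

lemma upsTo_ivt (s : Fin M → Bool) (L : ℕ) :
    ∀ h ≤ upsTo s L, ∃ k, k ≤ L ∧ upsTo s k = h := by
  induction L with
  | zero => intro h hh; exact ⟨0, le_rfl, by simpa [upsTo_zero] using (Nat.le_zero.mp (by simpa [upsTo_zero] using hh)).symm ▸ (upsTo_zero s)⟩
  | succ L ih =>
    intro h hh
    rcases le_or_gt h (upsTo s L) with h1 | h1
    · obtain ⟨k, hk, hk2⟩ := ih h h1
      exact ⟨k, by omega, hk2⟩
    · have := upsTo_succ_le s L
      have : h = upsTo s (L+1) := by omega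
      exact ⟨L+1, le_rfl, this.symm⟩

lemma cardStep (P : ℕ → Prop) [DecidablePred P] (L : ℕ) :
    ((Finset.range (L+1)).filter P).card
      = ((Finset.range L).filter P).card + (if P L then 1 else 0) := by
  rw [Finset.range_add_one, Finset.filter_insert]
  split
  · rw [Finset.card_insert_of_notMem (by simp)]
  · simp

end Toolbox
section NthOne
variable {M : ℕ}

lemma np_mem (s : Fin M → Bool) {h k0 : ℕ} (hex : upsTo s k0 = h) :
    upsTo s (nthOnePos s h) = h :=
  Nat.sInf_mem (⟨k0, hex⟩ : {k | upsTo s k = h}.Nonempty)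

lemma np_le (s : Fin M → Bool) {h k0 : ℕ} (hex : upsTo s k0 = h) :
    nthOnePos s h ≤ k0 := Nat.sInf_le hex

lemma np_not (s : Fin M → Bool) {h k : ℕ} (hk : k < nthOnePos s h) :
    upsTo s k ≠ h := fun hmem =>
  Nat.notMem_of_lt_sInf (s := {k | upsTo s k = h}) hk hmem

lemma np_pos (s : Fin M → Bool) {h : ℕ} (h1 : 1 ≤ h) {k0 : ℕ} (hex : upsTo s k0 = h) :
    1 ≤ nthOnePos s h := by
  by_contra hc
  have h0 : nthOnePos s h = 0 := by omega
  have := np_mem s hex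
  rw [h0, upsTo_zero] at this
  omega

lemma np_pred (s : Fin M → Bool) {h : ℕ} (h1 : 1 ≤ h) {k0 : ℕ} (hex : upsTo s k0 = h) :
    upsTo s (nthOnePos s h - 1) + 1 = h ∧ extS s (nthOnePos s h - 1) = true := by
  set p := nthOnePos s h with hp
  have hpos : 1 ≤ p := np_pos s h1 hex
  have hmem : upsTo s p = h := np_mem s hex
  have hne : upsTo s (p-1) ≠ h := np_not s (by omega)
  have hp1 : p - 1 + 1 = p := by omega
  have hsucc : upsTo s ((p-1)+1) = h := by rwa [hp1]
  have hstep := upsTo_succ s (p-1)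
  have hle : upsTo s (p-1) ≤ upsTo s ((p-1)+1) := upsTo_mono s (by omega)
  rw [hsucc] at hstep
  constructor
  · split at hstep <;> omega
  · by_contra hb
    simp only [Bool.not_eq_true] at hb
    rw [hb] at hstep
    simp at hstep
    omega

lemma np_eq (s : Fin M → Bool) {h j : ℕ} (h1 : upsTo s (j+1) = h) (h2 : upsTo s j < h) :
    nthOnePos s h = j + 1 := by
  refine le_antisymm (np_le s h1) ?_
  by_contra hc
  have : nthOnePos s h ≤ j := by omega
  have := upsTo_mono s this
  have := np_mem s h1
  omega

end NthOne

section Patterns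
variable {M : ℕ}

/-- count of TF patterns at positions < L -/
def pkc {M : ℕ} (s : Fin M → Bool) (L : ℕ) : ℕ :=
  ((Finset.range L).filter (fun j => extS s j = true ∧ extS s (j+1) = false)).card

/-- count of FT patterns at positions < L -/
def vlc {M : ℕ} (s : Fin M → Bool) (L : ℕ) : ℕ :=
  ((Finset.range L).filter (fun j => extS s j = false ∧ extS s (j+1) = true)).card

def cmpl {M : ℕ} (s : Fin M → Bool) : Fin M → Bool := fun i => !(s i)

lemma extS_cmpl (s : Fin M → Bool) {j : ℕ} (hj : j < M) :
    extS (cmpl s) j = !(extS s j) := by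
  simp [extS, cmpl, hj]

lemma pkc_mono (s : Fin M → Bool) {k l : ℕ} (h : k ≤ l) : pkc s k ≤ pkc s l :=
  Finset.card_le_card (Finset.filter_subset_filter _ (by simpa using Finset.range_subset_range.2 h))

lemma vlc_mono (s : Fin M → Bool) {k l : ℕ} (h : k ≤ l) : vlc s k ≤ vlc s l :=
  Finset.card_le_card (Finset.filter_subset_filter _ (by simpa using Finset.range_subset_range.2 h))

lemma pkc_succ (s : Fin M → Bool) (L : ℕ) :
    pkc s (L+1) = pkc s L + (if extS s L = true ∧ extS s (L+1) = false then 1 else 0) := by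
  unfold pkc
  rw [Finset.range_add_one, Finset.filter_insert]
  split
  · rw [Finset.card_insert_of_notMem (by simp)]
  · simp

lemma vlc_succ (s : Fin M → Bool) (L : ℕ) :
    vlc s (L+1) = vlc s L + (if extS s L = false ∧ extS s (L+1) = true then 1 else 0) := by
  unfold vlc
  rw [Finset.range_add_one, Finset.filter_insert]
  split
  · rw [Finset.card_insert_of_notMem (by simp)]
  · simp

/-- telescoping alternation identity -/
lemma alternation (s : Fin M → Bool) (L : ℕ) :
    pkc s L + (if extS s L = true then 1 else 0)
      = vlc s L + (if extS s 0 = true then 1 else 0) := by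
  induction L with
  | zero => simp [pkc, vlc]
  | succ L ih =>
    rw [pkc_succ, vlc_succ]
    cases hL : extS s L <;> cases hL1 : extS s (L+1) <;>
      simp [hL, hL1] at ih ⊢ <;> omega

/-- complement exchanges peaks/valleys below the boundary -/
lemma vlc_cmpl (s : Fin M → Bool) {L : ℕ} (hL : L < M) : vlc s L = pkc (cmpl s) L := by
  unfold vlc pkc
  congr 1
  apply Finset.filter_congr
  intro j hj
  simp only [Finset.mem_range] at hj
  rw [extS_cmpl s (by omega), extS_cmpl s (by omega)]
  simp

lemma pkc_cmpl_top (s : Fin M → Bool) (h1 : 1 ≤ M) :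
    pkc (cmpl s) M = vlc s M + (if extS s (M-1) = false then 1 else 0) := by
  obtain ⟨M', rfl⟩ : ∃ M', M = M' + 1 := ⟨M - 1, by omega⟩
  rw [pkc_succ, vlc_succ]
  have h2 : vlc s M' = pkc (cmpl s) M' := vlc_cmpl s (by omega)
  have h3 : extS (cmpl s) M' = !(extS s M') := extS_cmpl s (by omega)
  have h4 : extS s (M'+1) = false := extS_eq_false_of_ge s (by omega)
  have h5 : extS (cmpl s) (M'+1) = false := extS_eq_false_of_ge _ (by omega)
  simp only [h4, h5, h3, Nat.add_sub_cancel]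
  cases hM : extS s M' <;> simp [hM, h2]

end Patterns
section PeakDecomp
variable {M : ℕ}

/-- peaks in a prefix are enumerated by which up-step they follow -/
lemma peak_decomp (s : Fin M → Bool) (L : ℕ) :
    pkc s L = ((Finset.range (upsTo s L)).filter
      (fun c => extS s (nthOnePos s (c+1)) = false ∧ nthOnePos s (c+1) ≤ L)).card := by
  unfold pkc
  apply Finset.card_nbij' (i := fun j => upsTo s (j+1) - 1)
    (j := fun c => nthOnePos s (c+1) - 1)
  · intro j hj
    simp only [Finset.mem_coe, Finset.mem_filter, Finset.mem_range] at hj ⊢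
    obtain ⟨hjL, hT, hF⟩ := hj
    have hstep : upsTo s (j+1) = upsTo s j + 1 := by
      rw [upsTo_succ, hT]; simp
    have hnp : nthOnePos s (upsTo s (j+1) - 1 + 1) = j + 1 := by
      have h1 : upsTo s (j+1) - 1 + 1 = upsTo s (j+1) := by omega
      rw [h1]
      exact np_eq s rfl (by omega)
    refine ⟨?_, by rw [hnp]; exact hF, by rw [hnp]; omega⟩
    have : upsTo s (j+1) ≤ upsTo s L := upsTo_mono s (by omega)
    omega
  · intro c hc
    simp only [Finset.mem_coe, Finset.mem_filter, Finset.mem_range] at hc ⊢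
    obtain ⟨hcL, hF, hPL⟩ := hc
    obtain ⟨k0, hk0L, hk0⟩ := upsTo_ivt s L (c+1) (by omega)
    obtain ⟨hpred, hTT⟩ := np_pred s (by omega) hk0
    have hpos : 1 ≤ nthOnePos s (c+1) := np_pos s (by omega) hk0
    have hP1 : nthOnePos s (c+1) - 1 + 1 = nthOnePos s (c+1) := by omega
    refine ⟨by omega, hTT, by rw [hP1]; exact hF⟩
  · intro j hj
    simp only [Finset.mem_coe, Finset.mem_filter, Finset.mem_range] at hj
    obtain ⟨hjL, hT, hF⟩ := hj
    have hstep : upsTo s (j+1) = upsTo s j + 1 := by rw [upsTo_succ, hT]; simp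
    have h1 : upsTo s (j+1) - 1 + 1 = upsTo s (j+1) := by omega
    beta_reduce; rw [h1, np_eq s rfl (by omega)]; omega
  · intro c hc
    simp only [Finset.mem_coe, Finset.mem_filter, Finset.mem_range] at hc
    obtain ⟨hcL, hF, hPL⟩ := hc
    obtain ⟨k0, hk0L, hk0⟩ := upsTo_ivt s L (c+1) (by omega)
    obtain ⟨hpred, hTT⟩ := np_pred s (by omega) hk0
    have hpos : 1 ≤ nthOnePos s (c+1) := np_pos s (by omega) hk0
    have hP1 : nthOnePos s (c+1) - 1 + 1 = nthOnePos s (c+1) := by omega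
    beta_reduce; rw [hP1, np_mem s hk0]
    omega

end PeakDecomp
section Maps

/-- first component of the path → pair map: is the (c+1)-st up-step a peak? -/
noncomputable def fOf (n : ℕ) (s : Fin (2*n) → Bool) : Fin (n-1) → Bool :=
  fun c => !(extS s (nthOnePos s ((c:ℕ)+1)))

/-- second component: is the (c+1)-st down-step a valley? -/
noncomputable def gOf (n : ℕ) (s : Fin (2*n) → Bool) : Fin (n-1) → Bool :=
  fun c => extS s (nthOnePos (cmpl s) ((c:ℕ)+1))

/-- count of completed runs, `u` completed steps, with the final full run added. -/
def sIn (n : ℕ) (f : Fin (n-1) → Bool) (u : ℕ) : ℕ :=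
  upsTo f u + (if n ≤ u then 1 else 0)

/-- the next step of the reconstructed path is up -/
def cnd (n : ℕ) (f g : Fin (n-1) → Bool) (j u : ℕ) : Prop :=
  u < n ∧ sIn n f u ≤ sIn n g (j - u)

/-- up-steps count of the reconstructed path -/
noncomputable def uu (n : ℕ) (f g : Fin (n-1) → Bool) : ℕ → ℕ
  | 0 => 0
  | j+1 => uu n f g j + (if cnd n f g j (uu n f g j) then 1 else 0)

/-- the reconstructed path -/
noncomputable def psi (n : ℕ) (f g : Fin (n-1) → Bool) : Fin (2*n) → Bool :=
  fun i => decide (cnd n f g (i:ℕ) (uu n f g (i:ℕ)))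

lemma cmpl_cmpl {M : ℕ} (s : Fin M → Bool) : cmpl (cmpl s) = s := by
  funext i; simp [cmpl]

lemma upsTo_cmpl {M : ℕ} (s : Fin M → Bool) {k : ℕ} (hk : k ≤ M) :
    upsTo (cmpl s) k + upsTo s k = k := by
  induction k with
  | zero => simp [upsTo_zero]
  | succ k ih =>
    rw [upsTo_succ, upsTo_succ, extS_cmpl s (by omega)]
    have := ih (by omega)
    cases h : extS s k <;> simp [h] <;> omega

end Maps

section DyckFacts
variable {n : ℕ} {s : Fin (2*n) → Bool}

lemma dk_total (hs : isDyck n s) : upsTo s (2*n) = n := hs.1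

lemma dk_first (hn : 1 ≤ n) (hs : isDyck n s) : extS s 0 = true := by
  have h1 := hs.2 1 (by omega)
  have h2 := upsTo_succ s 0
  rw [upsTo_zero] at h2
  by_contra hb
  simp only [Bool.not_eq_true] at hb
  rw [hb] at h2; simp at h2; omega

lemma dk_pen (hn : 1 ≤ n) (hs : isDyck n s) : upsTo s (2*n - 1) = n := by
  have h1 := hs.2 (2*n-1) (by omega)
  have h2 : upsTo s (2*n-1) ≤ n := by
    have := upsTo_mono s (show 2*n-1 ≤ 2*n by omega)
    rw [dk_total hs] at this; exact this
  omega

lemma dk_last (hn : 1 ≤ n) (hs : isDyck n s) : extS s (2*n - 1) = false := by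
  have h2 := upsTo_succ s (2*n-1)
  have h3 : 2*n - 1 + 1 = 2*n := by omega
  rw [h3, dk_total hs, dk_pen hn hs] at h2
  by_contra hb
  simp only [Bool.not_eq_false] at hb
  rw [hb] at h2; simp at h2

lemma dk_ult (hs : isDyck n s) {j : ℕ} (hT : extS s j = true) :
    j < 2*n ∧ upsTo s j < n := by
  have hj : j < 2*n := by
    by_contra hb
    rw [extS_eq_false_of_ge s (by omega)] at hT; simp at hT
  refine ⟨hj, ?_⟩
  have h1 : upsTo s (j+1) = upsTo s j + 1 := by rw [upsTo_succ, hT]; simp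
  have h2 : upsTo s (j+1) ≤ n := by
    have := upsTo_mono s (show j+1 ≤ 2*n by omega)
    rw [dk_total hs] at this; exact this
  omega

lemma dk_downs (hs : isDyck n s) {j : ℕ} (hj : j ≤ 2*n) : j - upsTo s j ≤ upsTo s j := by
  have := hs.2 j hj; omega

lemma dk_down_total (hs : isDyck n s) : upsTo (cmpl s) (2*n) = n := by
  have := upsTo_cmpl s (le_refl (2*n))
  rw [dk_total hs] at this; omega

/-- counting f-trues below u: unfold the Fin coercion -/
lemma fOf_count (hn : 1 ≤ n) (s : Fin (2*n) → Bool) {u : ℕ} (hu : u ≤ n - 1) :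
    upsTo (fOf n s) u
      = ((Finset.range u).filter (fun c => extS s (nthOnePos s (c+1)) = false)).card := by
  unfold upsTo
  apply Finset.card_bij (i := fun c _ => c)
  · intro c hc
    simp only [Finset.mem_filter, Finset.mem_range] at hc ⊢
    obtain ⟨hcu, hext⟩ := hc
    have hlt : c < n - 1 := by omega
    rw [extS, dif_pos hlt] at hext
    simp only [fOf] at hext
    refine ⟨hcu, ?_⟩
    simpa using hext
  · intro c hc c' hc' h; exact h

  · intro c hc
    simp only [Finset.mem_filter, Finset.mem_range] at hc
    obtain ⟨hcu, hext⟩ := hc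
    refine ⟨c, ?_, rfl⟩
    simp only [Finset.mem_filter, Finset.mem_range]
    have hlt : c < n - 1 := by omega
    rw [extS, dif_pos hlt]
    simp only [fOf]
    refine ⟨hcu, ?_⟩
    simpa using hext

lemma gOf_count (hn : 1 ≤ n) (s : Fin (2*n) → Bool) {d : ℕ} (hd : d ≤ n - 1) :
    upsTo (gOf n s) d
      = ((Finset.range d).filter (fun c => extS s (nthOnePos (cmpl s) (c+1)) = true)).card := by
  unfold upsTo
  apply Finset.card_bij (i := fun c _ => c)
  · intro c hc
    simp only [Finset.mem_filter, Finset.mem_range] at hc ⊢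
    obtain ⟨hcu, hext⟩ := hc
    have hlt : c < n - 1 := by omega
    rw [extS, dif_pos hlt] at hext
    simpa [gOf] using ⟨hcu, hext⟩
  · intro c hc c' hc' h; exact h
  · intro c hc
    simp only [Finset.mem_filter, Finset.mem_range] at hc
    obtain ⟨hcu, hext⟩ := hc
    refine ⟨c, ?_, rfl⟩
    simp only [Finset.mem_filter, Finset.mem_range]
    have hlt : c < n - 1 := by omega
    rw [extS, dif_pos hlt]
    simpa [gOf] using ⟨hcu, hext⟩

end DyckFacts
section Counts
variable {n : ℕ}

lemma pkc_eq_fcount (hn : 1 ≤ n) (s : Fin (2*n) → Bool) {j : ℕ}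
    (hu : upsTo s j ≤ n - 1) :
    pkc s j = upsTo (fOf n s) (upsTo s j) := by
  rw [peak_decomp s j, fOf_count hn s hu]
  congr 1
  apply Finset.filter_congr
  intro c hc
  simp only [Finset.mem_range] at hc
  obtain ⟨k, hk, hk2⟩ := upsTo_ivt s j (c+1) (by omega)
  have hP : nthOnePos s (c+1) ≤ j := le_trans (np_le s hk2) hk
  simp [hP]

lemma vlc_eq_gcount (hn : 1 ≤ n) (s : Fin (2*n) → Bool) {j : ℕ} (hj : j ≤ 2*n)
    (hj2 : j < 2*n ∨ extS s (2*n - 1) = true)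
    (hd : upsTo (cmpl s) j ≤ n - 1) :
    vlc s j = upsTo (gOf n s) (upsTo (cmpl s) j) := by
  have key : ∀ c, c < upsTo (cmpl s) j →
      nthOnePos (cmpl s) (c+1) ≤ j ∧ nthOnePos (cmpl s) (c+1) < 2*n := by
    intro c hc
    by_cases hj3 : j < 2*n
    · obtain ⟨k, hk, hk2⟩ := upsTo_ivt (cmpl s) j (c+1) (by omega)
      have := np_le (cmpl s) hk2
      omega
    · have hj4 : j = 2*n := by omega
      have hT : extS s (2*n-1) = true := by tauto
      have h5 : upsTo (cmpl s) (2*n) = upsTo (cmpl s) (2*n-1) := by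
        have h6 := upsTo_succ (cmpl s) (2*n-1)
        have h7 : 2*n - 1 + 1 = 2*n := by omega
        have h8 : extS (cmpl s) (2*n-1) = false := by
          rw [extS_cmpl s (by omega), hT]; rfl
        rw [h7, h8] at h6
        simpa using h6
      obtain ⟨k, hk, hk2⟩ := upsTo_ivt (cmpl s) (2*n-1) (c+1)
        (by rw [← h5]; rw [hj4] at hc; omega)
      have := np_le (cmpl s) hk2
      omega
  have flip : vlc s j = pkc (cmpl s) j := by
    by_cases hj3 : j < 2*n
    · exact vlc_cmpl s hj3
    · have hj4 : j = 2*n := by omega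
      have hT : extS s (2*n-1) = true := by tauto
      subst hj4
      rw [pkc_cmpl_top s (by omega), hT]
      simp
  rw [flip, peak_decomp (cmpl s) j, gOf_count hn s hd]
  congr 1
  apply Finset.filter_congr
  intro c hc
  simp only [Finset.mem_range] at hc
  obtain ⟨hP1, hP2⟩ := key c hc
  rw [extS_cmpl s hP2]
  simp [hP1]

end Counts
lemma cardStep' (P : ℕ → Prop) [DecidablePred P] {L : ℕ} (hL : 1 ≤ L) :
    ((Finset.range L).filter P).card
      = ((Finset.range (L-1)).filter P).card + (if P (L-1) then 1 else 0) := by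
  obtain ⟨L', rfl⟩ : ∃ L', L = L' + 1 := ⟨L - 1, by omega⟩
  simpa using cardStep P L'

section OnesLemmas
variable {n : ℕ} {s : Fin (2*n) → Bool}

lemma dk_pkc_top (hn : 1 ≤ n) (hs : isDyck n s) :
    pkc s (2*n) = ones (fOf n s) + 1 := by
  rw [peak_decomp s (2*n), dk_total hs]
  have hdrop : ((Finset.range n).filter (fun c => extS s (nthOnePos s (c+1)) = false
      ∧ nthOnePos s (c+1) ≤ 2*n)).card
      = ((Finset.range n).filter (fun c => extS s (nthOnePos s (c+1)) = false)).card := by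
    congr 1
    apply Finset.filter_congr
    intro c hc
    simp only [Finset.mem_range] at hc
    obtain ⟨k, hk, hk2⟩ := upsTo_ivt s (2*n) (c+1) (by rw [dk_total hs]; omega)
    have := np_le s hk2
    simp only [and_iff_left_iff_imp]
    intro _; omega
  rw [hdrop, cardStep' _ hn]
  have hlastup : extS s (nthOnePos s (n-1+1)) = false := by
    have h9 : n - 1 + 1 = n := by omega
    rw [h9]
    by_contra hb
    simp only [Bool.not_eq_false] at hb
    obtain ⟨k, hk, hk2⟩ := upsTo_ivt s (2*n-1) n (by rw [dk_pen hn hs])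
    have hmem := np_mem s hk2
    have := (dk_ult hs hb).2
    omega
  rw [if_pos hlastup, ← fOf_count hn s (le_refl (n-1))]
  rfl

lemma dk_peaks (hn : 1 ≤ n) (hs : isDyck n s) :
    interiorPeaks s = ones (fOf n s) + 1 := by
  have h0 : interiorPeaks s = pkc s (2*n-1) := rfl
  have h7 : 2*n - 1 + 1 = 2*n := by omega
  have h1 : pkc s (2*n) = pkc s (2*n-1) := by
    have := pkc_succ s (2*n-1)
    rw [h7, dk_last hn hs] at this
    simpa using this
  rw [h0, ← h1, dk_pkc_top hn hs]

lemma dk_vlc_top (hn : 1 ≤ n) (hs : isDyck n s) :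
    vlc s (2*n) = ones (fOf n s) := by
  have halt := alternation s (2*n)
  rw [extS_eq_false_of_ge s (le_refl (2*n)), dk_first hn hs, dk_pkc_top hn hs] at halt
  simp at halt
  omega

lemma dk_ones_g (hn : 1 ≤ n) (hs : isDyck n s) :
    ones (gOf n s) = ones (fOf n s) := by
  have h7 : 2*n - 1 + 1 = 2*n := by omega
  have hdt := dk_down_total hs
  have hpen : upsTo (cmpl s) (2*n-1) = n - 1 := by
    have := upsTo_cmpl s (show 2*n-1 ≤ 2*n by omega)
    rw [dk_pen hn hs] at this
    omega
  have h1 : pkc (cmpl s) (2*n) = vlc s (2*n) + 1 := by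
    rw [pkc_cmpl_top s (by omega), dk_last hn hs]
    simp
  rw [peak_decomp (cmpl s) (2*n), hdt, cardStep' _ hn] at h1
  have hlastdn : nthOnePos (cmpl s) (n-1+1) = 2*n := by
    have h9 : n - 1 + 1 = n := by omega
    have := np_eq (cmpl s) (h := n) (j := 2*n-1) (by rw [h7]; exact hdt) (by omega)
    rw [h9]
    omega
  rw [if_pos (show extS (cmpl s) (nthOnePos (cmpl s) (n-1+1)) = false ∧ nthOnePos (cmpl s) (n-1+1) ≤ 2*n by
        rw [hlastdn]; exact ⟨extS_eq_false_of_ge _ (le_refl (2*n)), le_refl (2*n)⟩)] at h1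
  have hcnt : ((Finset.range (n-1)).filter (fun c => extS (cmpl s) (nthOnePos (cmpl s) (c+1)) = false
      ∧ nthOnePos (cmpl s) (c+1) ≤ 2*n)).card = ones (gOf n s) := by
    rw [show ones (gOf n s) = upsTo (gOf n s) (n-1) from rfl,
        gOf_count hn s (le_refl (n-1))]
    congr 1
    apply Finset.filter_congr
    intro c hc
    simp only [Finset.mem_range] at hc
    obtain ⟨k, hk, hk2⟩ := upsTo_ivt (cmpl s) (2*n-1) (c+1) (by omega)
    have hPk : nthOnePos (cmpl s) (c+1) ≤ 2*n - 1 := le_trans (np_le (cmpl s) hk2) hk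
    rw [extS_cmpl s (by omega)]
    constructor
    · rintro ⟨h, _⟩; simpa using h
    · intro h; exact ⟨by simp [h], by omega⟩
  rw [hcnt, dk_vlc_top hn hs] at h1
  omega

lemma dk_dom (hn : 1 ≤ n) (hs : isDyck n s) :
    ∀ x, upsTo (fOf n s) x ≤ upsTo (gOf n s) x := by
  intro x
  rcases le_or_gt (n-1) x with hx | hx
  · rw [upsTo_cap _ hx, upsTo_cap _ hx, dk_ones_g hn hs]
  · -- x ≤ n - 2
    set p := nthOnePos s (x+1) with hp
    set q := nthOnePos (cmpl s) (x+1) with hq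
    have hx1 : x + 1 ≤ n - 1 := by omega
    obtain ⟨kp, hkp, hkp2⟩ := upsTo_ivt s (2*n-1) (x+1) (by rw [dk_pen hn hs]; omega)
    have hpmem : upsTo s p = x+1 := np_mem s hkp2
    have hple : p ≤ 2*n-1 := le_trans (np_le s hkp2) hkp
    obtain ⟨hppred, hpT⟩ := np_pred s (by omega) hkp2
    rw [← hp] at hppred hpT
    have hppos : 1 ≤ p := np_pos s (by omega) hkp2
    have hpen : upsTo (cmpl s) (2*n-1) = n - 1 := by
      have := upsTo_cmpl s (show 2*n-1 ≤ 2*n by omega)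
      rw [dk_pen hn hs] at this
      omega
    obtain ⟨kq, hkq, hkq2⟩ := upsTo_ivt (cmpl s) (2*n-1) (x+1) (by omega)
    have hqmem : upsTo (cmpl s) q = x+1 := np_mem (cmpl s) hkq2
    have hqle : q ≤ 2*n-1 := le_trans (np_le (cmpl s) hkq2) hkq
    obtain ⟨hqpred, hqT⟩ := np_pred (cmpl s) (by omega) hkq2
    rw [← hq] at hqpred hqT
    have hqpos : 1 ≤ q := np_pos (cmpl s) (by omega) hkq2
    -- (i) upsTo f x = vlc s p
    have hi : upsTo (fOf n s) x + 1 = vlc s p + 1 := by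
      have e1 : pkc s p = upsTo (fOf n s) x + (if extS s p = false then 1 else 0) := by
        rw [peak_decomp s p, hpmem]
        have hdrop : ((Finset.range (x+1)).filter (fun c => extS s (nthOnePos s (c+1)) = false
            ∧ nthOnePos s (c+1) ≤ p)).card
            = ((Finset.range (x+1)).filter (fun c => extS s (nthOnePos s (c+1)) = false)).card := by
          congr 1
          apply Finset.filter_congr
          intro c hc
          simp only [Finset.mem_range] at hc
          obtain ⟨k, hk, hk2⟩ := upsTo_ivt s p (c+1) (by omega)
          have := np_le s hk2
          simp only [and_iff_left_iff_imp]
          intro _; omega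
        rw [hdrop, cardStep' _ (by omega : 1 ≤ x+1)]
        simp only [Nat.add_sub_cancel]
        rw [← fOf_count hn s (show x ≤ n-1 by omega)]
      have e2 := alternation s p
      rw [dk_first hn hs, e1] at e2
      cases h : extS s p
      · rw [h] at e2
        simp at e2
        omega
      · rw [h] at e2
        simp at e2
        omega
    -- (ii) upsTo g x + 1 = pkc s q
    have hq2n : q < 2*n := by omega
    have hii : upsTo (gOf n s) x + 1 = pkc s q := by
      have e1 : pkc (cmpl s) q = upsTo (gOf n s) x + (if extS s q = true then 1 else 0) := by
        rw [peak_decomp (cmpl s) q, hqmem]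
        have hdrop : ((Finset.range (x+1)).filter (fun c => extS (cmpl s) (nthOnePos (cmpl s) (c+1)) = false
            ∧ nthOnePos (cmpl s) (c+1) ≤ q)).card
            = ((Finset.range (x+1)).filter (fun c => extS s (nthOnePos (cmpl s) (c+1)) = true)).card := by
          congr 1
          apply Finset.filter_congr
          intro c hc
          simp only [Finset.mem_range] at hc
          obtain ⟨k, hk, hk2⟩ := upsTo_ivt (cmpl s) q (c+1) (by omega)
          have hPk := np_le (cmpl s) hk2
          rw [extS_cmpl s (by omega)]
          constructor
          · rintro ⟨h, _⟩; simpa using h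
          · intro h; exact ⟨by simp [h], by omega⟩
        rw [hdrop, cardStep' _ (by omega : 1 ≤ x+1)]
        simp only [Nat.add_sub_cancel]
        rw [← gOf_count hn s (show x ≤ n-1 by omega)]
      have e2 := alternation (cmpl s) q
      rw [extS_cmpl s hq2n, extS_cmpl s (by omega : (0:ℕ) < 2*n), dk_first hn hs,
          vlc_cmpl (cmpl s) hq2n, cmpl_cmpl, e1] at e2
      cases h : extS s q
      · rw [h] at e2
        simp at e2
        omega
      · rw [h] at e2
        simp at e2
        omega
    -- (iii) p < q
    have hq2nle : q ≤ 2*n := by omega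
    have hiii : p < q := by
      have h1 := hs.2 q (by omega)
      have h2 := upsTo_cmpl s hq2nle
      have h3 : x + 1 ≤ upsTo s q := by omega
      obtain ⟨k, hk, hk2⟩ := upsTo_ivt s q (x+1) h3
      have hpq : p ≤ q := le_trans (np_le s hk2) hk
      have hqF : extS s (q-1) = false := by
        have := extS_cmpl s (show q-1 < 2*n by omega)
        rw [hqT] at this
        simpa using this.symm
      rcases lt_or_eq_of_le hpq with h | h
      · exact h
      · rw [h] at hpT
        rw [hpT] at hqF
        simp at hqF
    -- (iv) vlc s p + 1 ≤ pkc s q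
    have hiv : vlc s p + 1 ≤ pkc s q := by
      have e2 := alternation s q
      rw [dk_first hn hs] at e2
      cases h : extS s q <;> rw [h] at e2
      · simp at e2
        have := vlc_mono s (show p ≤ q by omega)
        omega
      · simp at e2
        have hqF : extS s (q-1) = false := by
          have := extS_cmpl s (show q-1 < 2*n by omega)
          rw [hqT] at this
          simpa using this.symm
        have h8 : q - 1 + 1 = q := by omega
        have e3 := vlc_succ s (q-1)
        rw [h8, hqF, h] at e3
        simp at e3
        have := vlc_mono s (show p ≤ q - 1 by omega)
        omega
    omega

end OnesLemmas
section Crux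
variable {n : ℕ} {s : Fin (2*n) → Bool}

lemma sIn_small {f : Fin (n-1) → Bool} {u : ℕ} (hu : u < n) :
    sIn n f u = upsTo f u := by
  simp [sIn, Nat.not_le.mpr hu]

lemma dk_char (hn : 1 ≤ n) (hs : isDyck n s) {j : ℕ} (hj : j < 2*n) :
    extS s j = true ↔ cnd n (fOf n s) (gOf n s) j (upsTo s j) := by
  constructor
  · intro hT
    have hu_lt : upsTo s j < n := (dk_ult hs hT).2
    have hd_le : j - upsTo s j ≤ upsTo s j := dk_downs hs (by omega)
    refine ⟨hu_lt, ?_⟩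
    rw [sIn_small hu_lt, sIn_small (by omega)]
    have hsucc : upsTo s (j+1) = upsTo s j + 1 := by rw [upsTo_succ, hT]; simp
    have e1 : pkc s j = upsTo (fOf n s) (upsTo s j) :=
      pkc_eq_fcount hn s (by omega)
    have hcm : upsTo (cmpl s) (j+1) = j - upsTo s j := by
      have := upsTo_cmpl s (show j+1 ≤ 2*n by omega)
      omega
    have e2 : vlc s (j+1) = upsTo (gOf n s) (j - upsTo s j) := by
      have := vlc_eq_gcount hn s (j := j+1) (by omega)
        (by
          rcases Nat.lt_or_ge (j+1) (2*n) with h | h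
          · exact Or.inl h
          · right
            have : j = 2*n - 1 := by omega
            rwa [← this])
        (by omega)
      rwa [hcm] at this
    have e3 : pkc s j ≤ vlc s (j+1) := by
      have halt := alternation s (j+1)
      rw [dk_first hn hs] at halt
      have hmono := pkc_mono s (show j ≤ j+1 by omega)
      cases h1 : extS s (j+1)
      · have hstep := pkc_succ s j
        rw [hT, h1] at hstep
        rw [h1] at halt
        simp at hstep halt
        omega
      · rw [h1] at halt
        simp at halt
        omega
    omega
  · intro hC
    obtain ⟨hu_lt, hle⟩ := hC
    by_contra hb
    simp only [Bool.not_eq_true] at hb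
    have hd_le : j - upsTo s j ≤ upsTo s j := dk_downs hs (by omega)
    rw [sIn_small hu_lt, sIn_small (by omega)] at hle
    have hsucc : upsTo s (j+1) = upsTo s j := by rw [upsTo_succ, hb]; simp
    have e1 : pkc s (j+1) = upsTo (fOf n s) (upsTo s j) := by
      have := pkc_eq_fcount hn s (j := j+1) (by omega)
      rwa [hsucc] at this
    have hcm : upsTo (cmpl s) j = j - upsTo s j := by
      have := upsTo_cmpl s (show j ≤ 2*n by omega)
      omega
    have e2 : vlc s j = upsTo (gOf n s) (j - upsTo s j) := by
      have := vlc_eq_gcount hn s (j := j) (by omega) (Or.inl hj) (by omega)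
      rwa [hcm] at this
    have e3 : pkc s (j+1) = vlc s j + 1 := by
      have halt := alternation s (j+1)
      rw [dk_first hn hs] at halt
      have hstep := vlc_succ s j
      rw [hb] at hstep
      cases h1 : extS s (j+1) <;> rw [h1] at halt hstep <;>
        simp at halt hstep <;> omega
    omega

end Crux
section Psi
variable {n : ℕ} (f g : Fin (n-1) → Bool)

lemma uu_succ (j : ℕ) :
    uu n f g (j+1) = uu n f g j + (if cnd n f g j (uu n f g j) then 1 else 0) := rfl

lemma uu_le_n : ∀ j, uu n f g j ≤ n := by
  intro j
  induction j with
  | zero => simp [uu]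
  | succ j ih =>
    rw [uu_succ]
    by_cases h : cnd n f g j (uu n f g j)
    · have := h.1; simp [h]; omega
    · simp [h]; omega

lemma uu_le_self : ∀ j, uu n f g j ≤ j := by
  intro j
  induction j with
  | zero => simp [uu]
  | succ j ih => rw [uu_succ]; split <;> omega

lemma uu_mono {j k : ℕ} (h : j ≤ k) : uu n f g j ≤ uu n f g k := by
  induction k with
  | zero => simp [Nat.le_zero.mp h]
  | succ k ih =>
    rcases Nat.lt_or_ge j (k+1) with h1 | h1
    · have := ih (by omega); rw [uu_succ]; split <;> omega
    · have : j = k+1 := by omega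
      rw [this]

lemma sIn_mono (hn : 1 ≤ n) {u u' : ℕ} (h : u ≤ u') : sIn n f u ≤ sIn n f u' := by
  unfold sIn
  have := upsTo_mono f h
  split <;> split <;> omega

lemma sIn_succ_le (hn : 1 ≤ n) (d : ℕ) : sIn n f (d+1) ≤ sIn n f d + 1 := by
  unfold sIn
  rcases Nat.lt_or_ge (d+1) n with h | h
  · have := upsTo_succ_le f d
    rw [if_neg (by omega), if_neg (by omega)]
    omega
  · rcases Nat.lt_or_ge d n with h2 | h2
    · -- d + 1 = n
      have hd : d = n - 1 := by omega
      have : upsTo f (d+1) = upsTo f d := by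
        rw [upsTo_cap f (by omega), hd]
        rfl
      rw [if_pos (by omega), if_neg (by omega), this]
    · have : upsTo f (d+1) = upsTo f d := by
        rw [upsTo_cap f (by omega), upsTo_cap f (by omega)]
      rw [if_pos (by omega), if_pos (by omega), this]
      omega

lemma sIn_le_top (hn : 1 ≤ n) (x : ℕ) : sIn n f x ≤ ones f + 1 := by
  unfold sIn
  have := upsTo_le_ones f x
  split <;> omega

variable (hn : 1 ≤ n) (hfg : ones f = ones g)
  (hdom : ∀ x, upsTo f x ≤ upsTo g x)

include hn hfg hdom in
lemma uu_d_le (j : ℕ) (hj : j ≤ 2*n) : j - uu n f g j ≤ uu n f g j := by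
  induction j with
  | zero => simp
  | succ j ih =>
    have ih2 := ih (by omega)
    have hls := uu_le_self f g j
    have hln := uu_le_n f g j
    rw [uu_succ]
    by_cases h : cnd n f g j (uu n f g j)
    · simp [h]; omega
    · simp [h]
      rcases Nat.lt_or_ge (j - uu n f g j) (uu n f g j) with h1 | h1
      · omega
      · exfalso
        have heq : j - uu n f g j = uu n f g j := by omega
        rcases Nat.lt_or_ge (uu n f g j) n with h2 | h2
        · exact h ⟨h2, by
            rw [heq, sIn_small h2, sIn_small h2]
            exact hdom _⟩
        · have : uu n f g j = n := by omega
          omega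
  
include hn hfg hdom in
lemma uu_total : uu n f g (2*n) = n := by
  have h1 := uu_d_le f g hn hfg hdom (2*n) (le_refl _)
  have h2 := uu_le_n f g (2*n)
  omega

include hn hfg hdom in
lemma uu_K (j : ℕ) :
    sIn n g (j - uu n f g j) ≤ sIn n f (uu n f g j) := by
  induction j with
  | zero => simp [uu, sIn, upsTo_zero, Nat.not_le.mpr hn]
  | succ j ih =>
    have hls := uu_le_self f g j
    rw [uu_succ]
    by_cases h : cnd n f g j (uu n f g j)
    · simp only [h, if_pos]
      have h1 : j + 1 - (uu n f g j + 1) = j - uu n f g j := by omega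
      rw [h1]
      exact le_trans ih (sIn_mono f hn (by omega))
    · simp only [h, if_neg, not_false_iff, add_zero]
      have h1 : j + 1 - uu n f g j = (j - uu n f g j) + 1 := by omega
      rw [h1]
      rcases Nat.lt_or_ge (uu n f g j) n with h2 | h2
      · have h3 : ¬ (sIn n f (uu n f g j) ≤ sIn n g (j - uu n f g j)) := fun hc => h ⟨h2, hc⟩
        have := sIn_succ_le g hn (j - uu n f g j)
        omega
      · have h4 : uu n f g j = n := by have := uu_le_n f g j; omega
        have h5 : sIn n f n = ones f + 1 := by
          unfold sIn
          rw [upsTo_cap f (by omega), if_pos (le_refl n)]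
        rw [h4, h5, hfg]
        have := sIn_le_top g hn ((j - n) + 1)
        exact this

include hn hfg hdom in
lemma uu_K2 (j : ℕ) :
    sIn n f (uu n f g j) ≤ sIn n g (j - uu n f g j) + 1 := by
  induction j with
  | zero => simp [uu, sIn, upsTo_zero, Nat.not_le.mpr hn]
  | succ j ih =>
    have hls := uu_le_self f g j
    rw [uu_succ]
    by_cases h : cnd n f g j (uu n f g j)
    · simp only [h, if_pos]
      have h1 : j + 1 - (uu n f g j + 1) = j - uu n f g j := by omega
      rw [h1]
      have := sIn_succ_le f hn (uu n f g j)
      have := h.2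
      omega
    · simp only [h, if_neg, not_false_iff, add_zero]
      have h1 : j + 1 - uu n f g j = (j - uu n f g j) + 1 := by omega
      rw [h1]
      have := sIn_mono g hn (show j - uu n f g j ≤ (j - uu n f g j) + 1 by omega)
      omega

include hn hfg hdom in
lemma uu_FR (j : ℕ) (hj : uu n f g j = n) : upsTo g (j - n) = ones g := by
  induction j with
  | zero => simp [uu] at hj; omega
  | succ j ih =>
    have hls := uu_le_self f g j
    have hln := uu_le_n f g j
    rw [uu_succ] at hj
    by_cases h : cnd n f g j (uu n f g j)
    · rw [if_pos h] at hj
      have hu : uu n f g j = n - 1 := by omega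
      have hc := h.2
      rw [hu] at hc
      have hsf : sIn n f (n-1) = ones f := by
        unfold sIn
        rw [if_neg (by omega)]
        rfl
      rw [hsf, hfg] at hc
      have hd1 : j + 1 - n = j - (n-1) := by omega
      rw [hd1]
      have hub := upsTo_le_ones g (j - (n-1))
      rcases Nat.lt_or_ge (j - (n-1)) n with h2 | h2
      · rw [sIn_small h2] at hc
        omega
      · exact upsTo_cap g (by omega)
    · rw [if_neg h] at hj
      have := ih hj
      have h2 := upsTo_mono g (show j - n ≤ j + 1 - n by omega)
      have h3 := upsTo_le_ones g (j + 1 - n)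
      omega

lemma psi_ext {j : ℕ} (hj : j < 2*n) :
    extS (psi n f g) j = decide (cnd n f g j (uu n f g j)) := by
  rw [extS, dif_pos hj]
  rfl

include hn hfg hdom in
lemma upsTo_psi (k : ℕ) (hk : k ≤ 2*n) : upsTo (psi n f g) k = uu n f g k := by
  induction k with
  | zero => simp [upsTo_zero, uu]
  | succ k ih =>
    rw [upsTo_succ, ih (by omega), psi_ext f g (by omega), uu_succ]
    by_cases h : cnd n f g k (uu n f g k)
    · simp [h]
    · simp [h]

include hn hfg hdom in
lemma psi_dyck : isDyck n (psi n f g) := by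
  constructor
  · rw [upsTo_psi f g hn hfg hdom (2*n) (le_refl _), uu_total f g hn hfg hdom]
  · intro k hk
    rw [upsTo_psi f g hn hfg hdom k hk]
    have := uu_d_le f g hn hfg hdom k hk
    have := uu_le_self f g k
    omega

end Psi
section RoundTrips
variable {n : ℕ}

lemma uu_eq_upsTo (hn : 1 ≤ n) {s : Fin (2*n) → Bool} (hs : isDyck n s) :
    ∀ j, j ≤ 2*n → uu n (fOf n s) (gOf n s) j = upsTo s j := by
  intro j
  induction j with
  | zero => simp [uu, upsTo_zero]
  | succ j ih =>
    intro hj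
    rw [uu_succ, ih (by omega), upsTo_succ]
    have hch := dk_char hn hs (show j < 2*n by omega)
    by_cases h : extS s j = true
    · rw [if_pos (hch.mp h), if_pos h]
    · rw [if_neg (fun hc => h (hch.mpr hc)), if_neg h]

lemma psi_phi (hn : 1 ≤ n) {s : Fin (2*n) → Bool} (hs : isDyck n s) :
    psi n (fOf n s) (gOf n s) = s := by
  funext i
  have hi : (i : ℕ) < 2*n := i.isLt
  show decide (cnd n (fOf n s) (gOf n s) (i : ℕ) (uu n (fOf n s) (gOf n s) (i : ℕ))) = s i
  rw [uu_eq_upsTo hn hs (i : ℕ) (by omega)]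
  have hext : extS s (i : ℕ) = s i := by
    rw [extS, dif_pos hi]
  have hch := dk_char hn hs hi
  by_cases h : extS s (i : ℕ) = true
  · rw [← hext, h, decide_eq_true_iff.mpr (hch.mp h)]
  · have h' : extS s (i : ℕ) = false := by simpa using h
    rw [← hext, h', decide_eq_false_iff_not.mpr (fun hc => h (hch.mpr hc))]

variable (f g : Fin (n-1) → Bool) (hn : 1 ≤ n) (hfg : ones f = ones g)
  (hdom : ∀ x, upsTo f x ≤ upsTo g x)

include hn hfg hdom in
lemma phi_psi_f : fOf n (psi n f g) = f := by
  funext c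
  have hc : (c : ℕ) < n - 1 := c.isLt
  set cc := (c : ℕ) with hcc
  have hdy := psi_dyck f g hn hfg hdom
  set ψ := psi n f g with hψ
  have hex : upsTo ψ (2*n) = n := hdy.1
  obtain ⟨k, hk, hk2⟩ := upsTo_ivt ψ (2*n) (cc+1) (by omega)
  set k0 := nthOnePos ψ (cc+1) with hk0
  have hk0mem : upsTo ψ k0 = cc+1 := np_mem ψ hk2
  have hk0le : k0 ≤ 2*n := le_trans (np_le ψ hk2) hk
  have hk0lt : k0 < 2*n := by
    rcases lt_or_eq_of_le hk0le with h | h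
    · exact h
    · rw [h, hex] at hk0mem; omega
  obtain ⟨hpred, hT⟩ := np_pred ψ (by omega) hk2
  rw [← hk0] at hpred hT
  have hpos : 1 ≤ k0 := np_pos ψ (by omega) hk2
  have huk0 : uu n f g k0 = cc + 1 := by
    have := upsTo_psi f g hn hfg hdom k0 hk0le
    rw [← hψ] at this
    omega
  have huk0' : uu n f g (k0-1) = cc := by
    have := upsTo_psi f g hn hfg hdom (k0-1) (by omega)
    rw [← hψ] at this
    omega
  have hcnd : cnd n f g (k0-1) cc := by
    have hpe := psi_ext f g (show k0 - 1 < 2*n by omega)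
    rw [← hψ] at hpe
    rw [hpe] at hT
    simp only [huk0'] at hT
    exact decide_eq_true_iff.mp hT
  have hccn : cc + 1 < n := by omega
  have hdle := uu_d_le f g hn hfg hdom (k0-1) (by omega)
  rw [huk0'] at hdle
  set d := k0 - 1 - cc with hd
  have hK := uu_K f g hn hfg hdom (k0-1)
  rw [huk0'] at hK
  have heq : upsTo g d = upsTo f cc := by
    have h1 := hcnd.2
    rw [sIn_small (show cc < n by omega), sIn_small (show d < n by omega)] at h1 hK
    omega
  have hself := uu_le_self f g (k0-1)
  rw [huk0'] at hself
  have hdk0 : k0 - (cc+1) = d := by omega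
  show (!extS ψ k0) = f c
  have hpsik0 : extS ψ k0 = decide (cnd n f g k0 (cc+1)) := by
    have := psi_ext f g hk0lt
    rw [← hψ] at this
    simp only [huk0] at this
    exact this
  have hfext : extS f cc = f c := by
    rw [extS, dif_pos hc]
  have hstep : upsTo f (cc+1) = upsTo f cc + (if f c = true then 1 else 0) := by
    rw [upsTo_succ, hfext]
  cases hfc : f c
  · have : cnd n f g k0 (cc+1) := by
      refine ⟨hccn, ?_⟩
      rw [hdk0, sIn_small hccn, sIn_small (show d < n by omega), hstep, hfc]
      simp [heq]
    rw [hpsik0, decide_eq_true_iff.mpr this]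
    rfl
  · have : ¬ cnd n f g k0 (cc+1) := by
      rintro ⟨-, h2⟩
      rw [hdk0, sIn_small hccn, sIn_small (show d < n by omega), hstep, hfc] at h2
      simp at h2
      omega
    rw [hpsik0, decide_eq_false_iff_not.mpr this]
    rfl

include hn hfg hdom in
lemma phi_psi_g : gOf n (psi n f g) = g := by
  funext c
  have hc : (c : ℕ) < n - 1 := c.isLt
  set cc := (c : ℕ) with hcc
  have hdy := psi_dyck f g hn hfg hdom
  set ψ := psi n f g with hψ
  have hcm : ∀ k, k ≤ 2*n → upsTo (cmpl ψ) k = k - uu n f g k := by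
    intro k hk
    have h1 := upsTo_cmpl ψ hk
    have h2 := upsTo_psi f g hn hfg hdom k hk
    rw [← hψ] at h2
    omega
  have hex : upsTo (cmpl ψ) (2*n) = n := by
    rw [hcm (2*n) (le_refl _), uu_total f g hn hfg hdom]
    omega
  obtain ⟨k, hk, hk2⟩ := upsTo_ivt (cmpl ψ) (2*n) (cc+1) (by omega)
  set k1 := nthOnePos (cmpl ψ) (cc+1) with hk1
  have hk1mem : upsTo (cmpl ψ) k1 = cc+1 := np_mem (cmpl ψ) hk2
  have hk1le : k1 ≤ 2*n := le_trans (np_le (cmpl ψ) hk2) hk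
  have hk1lt : k1 < 2*n := by
    rcases lt_or_eq_of_le hk1le with h | h
    · exact h
    · rw [h, hex] at hk1mem; omega
  obtain ⟨hpred, hT⟩ := np_pred (cmpl ψ) (by omega) hk2
  rw [← hk1] at hpred hT
  have hpos : 1 ≤ k1 := np_pos (cmpl ψ) (by omega) hk2
  have hflip : extS ψ (k1-1) = false := by
    have := extS_cmpl ψ (show k1 - 1 < 2*n by omega)
    rw [hT] at this
    simpa using this.symm
  have hncnd : ¬ cnd n f g (k1-1) (uu n f g (k1-1)) := by
    have := psi_ext f g (show k1 - 1 < 2*n by omega)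
    rw [← hψ, hflip] at this
    exact decide_eq_false_iff_not.mp this.symm
  set u := uu n f g (k1-1) with hu
  have huk1 : uu n f g k1 = u := by
    have h9 : k1 - 1 + 1 = k1 := by omega
    rw [← h9, uu_succ, if_neg hncnd, ← hu]
    omega
  have hdpred : k1 - 1 - u = cc := by
    have h1 := hcm (k1-1) (by omega)
    omega
  have hself := uu_le_self f g (k1-1)
  have hdk1 : k1 - u = cc + 1 := by
    have := hcm k1 hk1le
    rw [huk1] at this
    omega
  show extS ψ k1 = g c
  have hpsik1 : extS ψ k1 = decide (cnd n f g k1 u) := by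
    have := psi_ext f g hk1lt
    rw [← hψ] at this
    simp only [huk1] at this
    exact this
  have hgext : extS g cc = g c := by
    rw [extS, dif_pos hc]
  have hstep : upsTo g (cc+1) = upsTo g cc + (if g c = true then 1 else 0) := by
    rw [upsTo_succ, hgext]
  have hule := uu_le_n f g (k1-1)
  rw [← hu] at hule
  rcases lt_or_eq_of_le hule with hun | hun
  · -- u < n
    have hlt : sIn n g cc < sIn n f u := by
      by_contra hb
      exact hncnd ⟨by omega, by rw [hdpred]; omega⟩
    have hK2 := uu_K2 f g hn hfg hdom (k1-1)
    rw [← hu, hdpred] at hK2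
    have heq : sIn n f u = upsTo g cc + 1 := by
      rw [sIn_small (show cc < n by omega)] at hK2 hlt
      omega
    cases hgc : g c
    · have : ¬ cnd n f g k1 u := by
        rintro ⟨-, h2⟩
        rw [hdk1, sIn_small (show cc + 1 < n by omega), hstep, hgc, heq] at h2
        simp at h2
      rw [hpsik1, decide_eq_false_iff_not.mpr this]
    · have : cnd n f g k1 u := by
        refine ⟨by omega, ?_⟩
        rw [hdk1, sIn_small (show cc + 1 < n by omega), hstep, hgc, heq]
        simp
      rw [hpsik1, decide_eq_true_iff.mpr this]
  · -- u = n
    have hFR := uu_FR f g hn hfg hdom (k1-1) (by omega)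
    have hcc9 : k1 - 1 - n = cc := by rw [← hun]; exact hdpred
    rw [hcc9] at hFR
    have hgc : g c = false := by
      by_contra hb
      simp only [Bool.not_eq_false] at hb
      have h1 : upsTo g (cc+1) = upsTo g cc + 1 := by
        rw [hstep, hb]; simp
      have := upsTo_le_ones g (cc+1)
      omega
    have : ¬ cnd n f g k1 u := by
      rintro ⟨h1, -⟩
      omega
    rw [hpsik1, decide_eq_false_iff_not.mpr this, hgc]

end RoundTrips
section MainBij
variable {n : ℕ}

noncomputable def Pset (n v : ℕ) : Finset ((Fin (n-1) → Bool) × (Fin (n-1) → Bool)) :=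
  Finset.univ.filter (fun p => ones p.1 = v ∧ ones p.2 = v ∧ ∀ x, upsTo p.1 x ≤ upsTo p.2 x)

lemma main_card (hn : 1 ≤ n) (v : ℕ) :
    ((Finset.univ : Finset (Fin (2*n) → Bool)).filter
      (fun s => isDyck n s ∧ interiorPeaks s = v + 1)).card = (Pset n v).card := by
  apply Finset.card_nbij' (i := fun s => (fOf n s, gOf n s))
    (j := fun p => psi n p.1 p.2)
  · intro s hs
    simp only [Finset.mem_coe, Finset.mem_filter, Finset.mem_univ, true_and] at hs
    obtain ⟨hdy, hpk⟩ := hs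
    simp only [Finset.mem_coe, Pset, Finset.mem_filter, Finset.mem_univ, true_and]
    have h1 := dk_peaks hn hdy
    have h2 := dk_ones_g hn hdy
    refine ⟨by omega, by omega, dk_dom hn hdy⟩
  · intro p hp
    simp only [Finset.mem_coe, Pset, Finset.mem_filter, Finset.mem_univ, true_and] at hp
    obtain ⟨h1, h2, h3⟩ := hp
    have hfg : ones p.1 = ones p.2 := by omega
    simp only [Finset.mem_coe, Finset.mem_filter, Finset.mem_univ, true_and]
    have hdy := psi_dyck p.1 p.2 hn hfg h3
    refine ⟨hdy, ?_⟩
    have := dk_peaks hn hdy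
    rw [phi_psi_f p.1 p.2 hn hfg h3] at this
    omega
  · intro s hs
    simp only [Finset.mem_coe, Finset.mem_filter, Finset.mem_univ, true_and] at hs
    exact psi_phi hn hs.1
  · intro p hp
    simp only [Finset.mem_coe, Pset, Finset.mem_filter, Finset.mem_univ, true_and] at hp
    obtain ⟨h1, h2, h3⟩ := hp
    have hfg : ones p.1 = ones p.2 := by omega
    exact Prod.ext (phi_psi_f p.1 p.2 hn hfg h3) (phi_psi_g p.1 p.2 hn hfg h3)

end MainBij
section Counting
variable {m : ℕ}

lemma ones_eq_card (f : Fin m → Bool) :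
    ones f = (Finset.univ.filter (fun i : Fin m => f i = true)).card := by
  unfold ones upsTo
  symm
  refine Finset.card_bij (fun x _ => (x : ℕ)) ?_ ?_ ?_
  · intro x hx
    simp only [Finset.mem_filter, Finset.mem_univ, true_and] at hx
    simp only [Finset.mem_filter, Finset.mem_range]
    refine ⟨x.isLt, ?_⟩
    rw [extS, dif_pos x.isLt]
    simpa using hx
  · intro x hx y hy h
    exact Fin.ext h
  · intro j hj
    simp only [Finset.mem_filter, Finset.mem_range] at hj
    obtain ⟨h1, h2⟩ := hj
    refine ⟨⟨j, h1⟩, ?_, rfl⟩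
    simp only [Finset.mem_filter, Finset.mem_univ, true_and]
    rw [extS, dif_pos h1] at h2
    exact h2

lemma card_ones (m v : ℕ) :
    ((Finset.univ : Finset (Fin m → Bool)).filter (fun f => ones f = v)).card
      = m.choose v := by
  have : ((Finset.univ : Finset (Fin m)).powersetCard v).card = m.choose v := by
    rw [Finset.card_powersetCard]
    simp
  rw [← this]
  apply Finset.card_nbij' (i := fun f => Finset.univ.filter (fun i => f i = true))
    (j := fun A => fun i => decide (i ∈ A))
  · intro f hf
    simp only [Finset.mem_coe, Finset.mem_filter, Finset.mem_univ, true_and] at hf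
    rw [Finset.mem_coe, Finset.mem_powersetCard_univ, ← ones_eq_card]
    exact hf
  · intro A hA
    rw [Finset.mem_coe, Finset.mem_powersetCard_univ] at hA
    simp only [Finset.mem_coe, Finset.mem_filter, Finset.mem_univ, true_and]
    rw [ones_eq_card, ← hA]
    congr 1
    apply Finset.ext
    intro i
    simp
  · intro f hf
    funext i
    simp
  · intro A hA
    apply Finset.ext
    intro i
    simp

lemma card_pairs (m a b : ℕ) :
    ((Finset.univ : Finset ((Fin m → Bool) × (Fin m → Bool))).filter
      (fun p => ones p.1 = a ∧ ones p.2 = b)).card = m.choose a * m.choose b := by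
  have hfp := Finset.filter_product (s := (Finset.univ : Finset (Fin m → Bool)))
    (t := (Finset.univ : Finset (Fin m → Bool)))
    (fun f => ones f = a) (fun g => ones g = b)
  rw [Finset.univ_product_univ] at hfp
  rw [hfp, Finset.card_product, card_ones, card_ones]

/-- prefix swap -/
def mix (f g : Fin m → Bool) (x0 : ℕ) : Fin m → Bool :=
  fun i => if (i : ℕ) < x0 then f i else g i

lemma extS_mix_lt {f g : Fin m → Bool} {x0 j : ℕ} (h : j < x0) :
    extS (mix f g x0) j = extS f j := by
  by_cases hj : j < m
  · simp [extS, mix, hj, h]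
  · rw [extS_eq_false_of_ge _ (by omega), extS_eq_false_of_ge _ (by omega)]

lemma extS_mix_ge {f g : Fin m → Bool} {x0 j : ℕ} (h : x0 ≤ j) :
    extS (mix f g x0) j = extS g j := by
  by_cases hj : j < m
  · simp [extS, mix, hj, Nat.not_lt.mpr h]
  · rw [extS_eq_false_of_ge _ (by omega), extS_eq_false_of_ge _ (by omega)]

lemma mix_ups_lo {f g : Fin m → Bool} {x0 y : ℕ} (h : y ≤ x0) :
    upsTo (mix f g x0) y = upsTo f y := by
  induction y with
  | zero => rw [upsTo_zero, upsTo_zero]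
  | succ y ih =>
    rw [upsTo_succ, upsTo_succ, ih (by omega), extS_mix_lt (by omega)]

lemma mix_ups_hi {f g : Fin m → Bool} {x0 x : ℕ} (h : x0 ≤ x) :
    upsTo (mix f g x0) x + upsTo g x0 = upsTo f x0 + upsTo g x := by
  induction x with
  | zero =>
    have : x0 = 0 := by omega
    subst this
    simp [upsTo_zero]
  | succ x ih =>
    rcases Nat.lt_or_ge x0 (x+1) with h1 | h1
    · have := ih (by omega)
      rw [upsTo_succ, upsTo_succ g x, extS_mix_ge (by omega)]
      omega
    · have : x0 = x + 1 := by omega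
      subst this
      rw [mix_ups_lo (le_refl _)]

lemma mix_mix {f g : Fin m → Bool} (x0 : ℕ) :
    mix (mix f g x0) (mix g f x0) x0 = f := by
  funext i
  unfold mix
  by_cases h : (i : ℕ) < x0 <;> simp [h]

lemma nat_sInf_eq {S : Set ℕ} {x0 : ℕ} (hmem : x0 ∈ S) (hmin : ∀ y < x0, y ∉ S) :
    sInf S = x0 := by
  refine le_antisymm (Nat.sInf_le hmem) ?_
  by_contra hc
  exact hmin _ (by omega) (Nat.sInf_mem ⟨x0, hmem⟩)

end Counting
section Reflection
variable {m : ℕ}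

noncomputable def cut (p : (Fin m → Bool) × (Fin m → Bool)) : ℕ :=
  sInf {x | upsTo p.2 x < upsTo p.1 x}

noncomputable def sw (p : (Fin m → Bool) × (Fin m → Bool)) :
    (Fin m → Bool) × (Fin m → Bool) :=
  (mix p.1 p.2 (cut p), mix p.2 p.1 (cut p))

lemma cut_mem {p : (Fin m → Bool) × (Fin m → Bool)} {X : ℕ}
    (hex : upsTo p.2 X < upsTo p.1 X) :
    upsTo p.2 (cut p) < upsTo p.1 (cut p) :=
  Nat.sInf_mem (⟨X, hex⟩ : {x | upsTo p.2 x < upsTo p.1 x}.Nonempty)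

lemma cut_min {p : (Fin m → Bool) × (Fin m → Bool)} {y : ℕ} (hy : y < cut p) :
    ¬ (upsTo p.2 y < upsTo p.1 y) := fun hc =>
  Nat.notMem_of_lt_sInf (s := {x | upsTo p.2 x < upsTo p.1 x}) hy hc

lemma cut_le {p : (Fin m → Bool) × (Fin m → Bool)} {X : ℕ}
    (hex : upsTo p.2 X < upsTo p.1 X) : cut p ≤ X :=
  Nat.sInf_le hex

lemma cut_eq {p : (Fin m → Bool) × (Fin m → Bool)} {X : ℕ}
    (hex : upsTo p.2 X < upsTo p.1 X) :
    upsTo p.1 (cut p) = upsTo p.2 (cut p) + 1 := by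
  have hmem := cut_mem hex
  have hpos : 1 ≤ cut p := by
    by_contra hc
    have h0 : cut p = 0 := by omega
    rw [h0, upsTo_zero, upsTo_zero] at hmem
    omega
  have hmin := cut_min (show cut p - 1 < cut p by omega)
  have h1 := upsTo_succ_le p.1 (cut p - 1)
  have h2 := upsTo_mono p.2 (show cut p - 1 ≤ cut p by omega)
  have h9 : cut p - 1 + 1 = cut p := by omega
  rw [h9] at h1
  omega

lemma cut_sw {p : (Fin m → Bool) × (Fin m → Bool)} {X : ℕ}
    (hex : upsTo p.2 X < upsTo p.1 X) : cut (sw p) = cut p := by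
  apply nat_sInf_eq
  · show upsTo (sw p).2 (cut p) < upsTo (sw p).1 (cut p)
    unfold sw
    simp only
    rw [mix_ups_lo (le_refl _), mix_ups_lo (le_refl _)]
    exact cut_mem hex
  · intro y hy
    show ¬ (upsTo (sw p).2 y < upsTo (sw p).1 y)
    unfold sw
    simp only
    rw [mix_ups_lo (by omega : y ≤ cut p), mix_ups_lo (by omega : y ≤ cut p)]
    exact cut_min hy

lemma sw_sw {p : (Fin m → Bool) × (Fin m → Bool)} {X : ℕ}
    (hex : upsTo p.2 X < upsTo p.1 X) : sw (sw p) = p := by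
  have hc := cut_sw hex
  show (mix (sw p).1 (sw p).2 (cut (sw p)), mix (sw p).2 (sw p).1 (cut (sw p))) = p
  rw [hc]
  exact Prod.ext (mix_mix (cut p)) (mix_mix (cut p))

lemma bad_card (m v : ℕ) (hv : 1 ≤ v) :
    ((Finset.univ : Finset ((Fin m → Bool) × (Fin m → Bool))).filter
      (fun p => (ones p.1 = v ∧ ones p.2 = v) ∧ ¬ ∀ x, upsTo p.1 x ≤ upsTo p.2 x)).card
    = m.choose (v+1) * m.choose (v-1) := by
  rw [← card_pairs m (v+1) (v-1)]
  apply Finset.card_nbij' (i := sw) (j := sw)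
  · intro p hp
    simp only [Finset.mem_coe, Finset.mem_filter, Finset.mem_univ, true_and] at hp
    obtain ⟨⟨ho1, ho2⟩, hnall⟩ := hp
    push_neg at hnall
    obtain ⟨x, hx⟩ := hnall
    have hex : upsTo p.2 x < upsTo p.1 x := by omega
    have hxm : x ≤ m := by
      by_contra hc
      rw [upsTo_cap p.1 (by omega), upsTo_cap p.2 (by omega)] at hex
      omega
    have hcle : cut p ≤ m := le_trans (cut_le hex) hxm
    have hceq := cut_eq hex
    have h1 := mix_ups_hi (f := p.1) (g := p.2) hcle
    have h2 := mix_ups_hi (f := p.2) (g := p.1) hcle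
    simp only [Finset.mem_coe, Finset.mem_filter, Finset.mem_univ, true_and, sw]
    constructor
    · show ones (mix p.1 p.2 (cut p)) = v + 1
      have e1 : ones (mix p.1 p.2 (cut p)) = upsTo (mix p.1 p.2 (cut p)) m := rfl
      have e2 : upsTo p.2 m = v := ho2
      have e3 : upsTo p.1 m = v := ho1
      have e4 := upsTo_mono p.1 hcle
      omega
    · show ones (mix p.2 p.1 (cut p)) = v - 1
      have e1 : ones (mix p.2 p.1 (cut p)) = upsTo (mix p.2 p.1 (cut p)) m := rfl
      have e2 : upsTo p.2 m = v := ho2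
      have e3 : upsTo p.1 m = v := ho1
      have e4 := upsTo_mono p.2 hcle
      omega
  · intro q hq
    simp only [Finset.mem_coe, Finset.mem_filter, Finset.mem_univ, true_and] at hq
    obtain ⟨ho1, ho2⟩ := hq
    have hex : upsTo q.2 m < upsTo q.1 m := by
      have e1 : upsTo q.1 m = v + 1 := ho1
      have e2 : upsTo q.2 m = v - 1 := ho2
      omega
    have hcle : cut q ≤ m := cut_le hex
    have hceq := cut_eq hex
    have h1 := mix_ups_hi (f := q.1) (g := q.2) hcle
    have h2 := mix_ups_hi (f := q.2) (g := q.1) hcle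
    simp only [Finset.mem_coe, Finset.mem_filter, Finset.mem_univ, true_and, sw]
    refine ⟨⟨?_, ?_⟩, ?_⟩
    · show ones (mix q.1 q.2 (cut q)) = v
      have e1 : ones (mix q.1 q.2 (cut q)) = upsTo (mix q.1 q.2 (cut q)) m := rfl
      have e2 : upsTo q.2 m = v - 1 := ho2
      have e3 : upsTo q.1 m = v + 1 := ho1
      have e4 := upsTo_mono q.1 hcle
      omega
    · show ones (mix q.2 q.1 (cut q)) = v
      have e1 : ones (mix q.2 q.1 (cut q)) = upsTo (mix q.2 q.1 (cut q)) m := rfl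
      have e2 : upsTo q.2 m = v - 1 := ho2
      have e3 : upsTo q.1 m = v + 1 := ho1
      have e4 := upsTo_mono q.2 hcle
      omega
    · push_neg
      refine ⟨cut q, ?_⟩
      show upsTo (mix q.2 q.1 (cut q)) (cut q) < upsTo (mix q.1 q.2 (cut q)) (cut q)
      rw [mix_ups_lo (le_refl _), mix_ups_lo (le_refl _)]
      exact cut_mem hex
  · intro p hp
    simp only [Finset.mem_coe, Finset.mem_filter, Finset.mem_univ, true_and] at hp
    obtain ⟨-, hnall⟩ := hp
    push_neg at hnall
    obtain ⟨x, hx⟩ := hnall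
    exact sw_sw (show upsTo p.2 x < upsTo p.1 x by omega)
  · intro q hq
    simp only [Finset.mem_coe, Finset.mem_filter, Finset.mem_univ, true_and] at hq
    obtain ⟨ho1, ho2⟩ := hq
    have hex : upsTo q.2 m < upsTo q.1 m := by
      have e1 : upsTo q.1 m = v + 1 := ho1
      have e2 : upsTo q.2 m = v - 1 := ho2
      omega
    exact sw_sw hex

lemma key_count (m v : ℕ) (hv : 1 ≤ v) :
    ((Finset.univ : Finset ((Fin m → Bool) × (Fin m → Bool))).filter
      (fun p => (ones p.1 = v ∧ ones p.2 = v) ∧ ∀ x, upsTo p.1 x ≤ upsTo p.2 x)).card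
      + m.choose (v+1) * m.choose (v-1) = m.choose v * m.choose v := by
  rw [← bad_card m v hv, ← card_pairs m v v]
  rw [show ((Finset.univ : Finset ((Fin m → Bool) × (Fin m → Bool))).filter
      (fun p => ones p.1 = v ∧ ones p.2 = v))
    = (Finset.univ.filter (fun p : (Fin m → Bool) × (Fin m → Bool) =>
        ones p.1 = v ∧ ones p.2 = v)) from rfl]
  rw [← Finset.filter_filter (fun p : (Fin m → Bool) × (Fin m → Bool) =>
        ones p.1 = v ∧ ones p.2 = v) (fun p => ∀ x, upsTo p.1 x ≤ upsTo p.2 x),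
      ← Finset.filter_filter (fun p : (Fin m → Bool) × (Fin m → Bool) =>
        ones p.1 = v ∧ ones p.2 = v) (fun p => ¬ ∀ x, upsTo p.1 x ≤ upsTo p.2 x)]
  exact Finset.card_filter_add_card_filter_not _

end Reflection
section Arith

lemma nar_id (m v : ℕ) (hv : 1 ≤ v) (hvm : v ≤ m) :
    (v+1) * (m.choose v * m.choose v)
      = (v+1) * (m.choose (v+1) * m.choose (v-1)) + (m+1).choose v * m.choose v := by
  rcases eq_or_lt_of_le hvm with h | hlt
  · subst h
    rw [Nat.choose_self, Nat.choose_eq_zero_of_lt (by omega), Nat.choose_succ_self_right]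
    ring
  · obtain ⟨a, rfl⟩ : ∃ a, v = a + 1 := ⟨v-1, by omega⟩
    obtain ⟨b, rfl⟩ : ∃ b, m = a + b + 2 := ⟨m - a - 2, by omega⟩
    have h1 : (((a+b+2).choose (a+1) : ℕ) : ℚ)
        = (a+b+2).factorial / ((a+1).factorial * (b+1).factorial) := by
      rw [Nat.cast_choose ℚ (by omega), show a+b+2 - (a+1) = b+1 from by omega]
    have h2 : (((a+b+2).choose (a+1+1) : ℕ) : ℚ)
        = (a+b+2).factorial / ((a+2).factorial * b.factorial) := by
      rw [Nat.cast_choose ℚ (by omega), show a+b+2 - (a+2) = b from by omega,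
          show a+1+1 = a+2 from rfl]
    have h3 : (((a+b+2).choose (a+1-1) : ℕ) : ℚ)
        = (a+b+2).factorial / (a.factorial * (b+2).factorial) := by
      rw [show a+1-1 = a from rfl, Nat.cast_choose ℚ (by omega),
          show a+b+2 - a = b+2 from by omega]
    have h4 : (((a+b+2+1).choose (a+1) : ℕ) : ℚ)
        = (a+b+3).factorial / ((a+1).factorial * (b+2).factorial) := by
      rw [Nat.cast_choose ℚ (by omega), show a+b+2+1 - (a+1) = b+2 from by omega,
          show a+b+2+1 = a+b+3 from rfl]
    have key : ((a:ℚ)+1+1) * ((((a+b+2).choose (a+1) : ℕ) : ℚ) * (((a+b+2).choose (a+1) : ℕ) : ℚ))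
        = ((a:ℚ)+1+1) * ((((a+b+2).choose (a+1+1) : ℕ) : ℚ) * (((a+b+2).choose (a+1-1) : ℕ) : ℚ))
          + (((a+b+2+1).choose (a+1) : ℕ) : ℚ) * (((a+b+2).choose (a+1) : ℕ) : ℚ) := by
      rw [h1, h2, h3, h4,
          show a+b+3 = (a+b+2)+1 from rfl, Nat.factorial_succ (a+b+2),
          show a+2 = (a+1)+1 from rfl, Nat.factorial_succ (a+1),
          Nat.factorial_succ a,
          show b+2 = (b+1)+1 from rfl, Nat.factorial_succ (b+1),
          Nat.factorial_succ b]
      have ha : ((a.factorial : ℕ) : ℚ) ≠ 0 := Nat.cast_ne_zero.mpr (Nat.factorial_ne_zero a)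
      have hb : ((b.factorial : ℕ) : ℚ) ≠ 0 := Nat.cast_ne_zero.mpr (Nat.factorial_ne_zero b)
      have hm : (((a+b+2).factorial : ℕ) : ℚ) ≠ 0 :=
        Nat.cast_ne_zero.mpr (Nat.factorial_ne_zero _)
      push_cast
      field_simp
      ring
    have := key
    push_cast at this
    exact_mod_cast this

end Arith

lemma ones_zero_iff {M : ℕ} (f : Fin M → Bool) (h : ones f = 0) :
    f = fun _ => false := by
  funext i
  by_contra hb
  simp only [Bool.not_eq_false] at hb
  rw [ones_eq_card] at h
  have : i ∈ Finset.univ.filter (fun i : Fin M => f i = true) := by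
    simp [hb]
  rw [Finset.card_eq_zero] at h
  rw [h] at this
  exact absurd this (Finset.notMem_empty _)

lemma ones_const_false {M : ℕ} : ones (fun _ : Fin M => false) = 0 := by
  rw [ones_eq_card]
  simp

lemma upsTo_const_false {M : ℕ} (x : ℕ) : upsTo (fun _ : Fin M => false) x = 0 := by
  unfold upsTo
  convert Finset.card_empty
  apply Finset.filter_false_of_mem
  intro j _
  simp [extS]

theorem stmt0' (n v : ℕ) (hn : 1 ≤ n) (hv : v ≤ n - 1) :
    ((Finset.univ : Finset (Fin (2*n) → Bool)).filter
      (fun s => isDyck n s ∧ interiorPeaks s = v + 1)).card = narayana n v := by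
  rw [main_card hn v]
  by_cases hv0 : v = 0
  · subst hv0
    have hone : Pset n 0 = {((fun _ => false), (fun _ => false))} := by
      apply Finset.ext
      intro p
      simp only [Pset, Finset.mem_filter, Finset.mem_univ, true_and,
        Finset.mem_singleton]
      constructor
      · rintro ⟨h1, h2, -⟩
        have e1 := ones_zero_iff p.1 h1
        have e2 := ones_zero_iff p.2 h2
        exact Prod.ext e1 e2
      · rintro rfl
        refine ⟨ones_const_false, ones_const_false, fun x => ?_⟩
        simp only
        simp [upsTo_const_false]
    rw [hone, Finset.card_singleton]
    unfold narayana
    simp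
  · have hv1 : 1 ≤ v := by omega
    have hPeq : Pset n v = (Finset.univ.filter
        (fun p : (Fin (n-1) → Bool) × (Fin (n-1) → Bool) =>
          (ones p.1 = v ∧ ones p.2 = v) ∧ ∀ x, upsTo p.1 x ≤ upsTo p.2 x)) := by
      unfold Pset
      apply Finset.filter_congr
      intro p _
      tauto
    rw [hPeq]
    have hkey := key_count (n-1) v hv1
    have hid := nar_id (n-1) v hv1 hv
    have hn1 : n - 1 + 1 = n := by omega
    rw [hn1] at hid
    set P := (Finset.univ.filter
        (fun p : (Fin (n-1) → Bool) × (Fin (n-1) → Bool) =>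
          (ones p.1 = v ∧ ones p.2 = v) ∧ ∀ x, upsTo p.1 x ≤ upsTo p.2 x)).card with hP
    set X := (n-1).choose (v+1) * (n-1).choose (v-1) with hX
    have h2 : (v+1) * (P + X) = (v+1) * X + n.choose v * (n-1).choose v := by
      rw [hkey]
      exact hid
    rw [Nat.mul_add] at h2
    have hmul : n.choose v * (n-1).choose v = (v+1) * P := by omega
    unfold narayana
    exact (Nat.div_eq_of_eq_mul_right (by omega) hmul).symm

theorem stmt0 (n v : ℕ) (hn : 1 ≤ n) (hv : v ≤ n - 1) :
    ((Finset.univ : Finset (Fin (2*n) → Bool)).filter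
      (fun s => isDyck n s ∧ interiorPeaks s = v + 1)).card = narayana n v := by
  exact stmt0' n v hn hv
end

section
/- The number of bilateral Dyck paths of length 2n with exactly v+1 peaks (with boundary convention) equals C(n,v)^2, for 0 ≤ v ≤ n-1 and n ≥ 1. -/
open Finset
open scoped Classical

section Aux

lemma extS_lt {m : ℕ} (s : Fin m → Bool) {j : ℕ} (h : j < m) : extS s j = s ⟨j, h⟩ :=
  dif_pos h

lemma extS_ge {m : ℕ} (s : Fin m → Bool) {j : ℕ} (h : m ≤ j) : extS s j = false :=
  dif_neg (by omega)

lemma upsTo_eq_sum {m : ℕ} (s : Fin m → Bool) (k : ℕ) :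
    upsTo s k = ∑ j ∈ Finset.range k, (if extS s j = true then 1 else 0) :=
  Finset.card_filter _ _

lemma peaks_eq_sum {m : ℕ} (s : Fin m → Bool) :
    interiorPeaks s = ∑ j ∈ Finset.range (m-1),
      (if extS s j = true ∧ extS s (j+1) = false then 1 else 0) :=
  Finset.card_filter _ _

lemma sum_peel_last {M : ℕ} (hM : 1 ≤ M) (f : ℕ → ℕ) :
    ∑ j ∈ Finset.range M, f j = (∑ j ∈ Finset.range (M-1), f j) + f (M-1) := by
  obtain ⟨w, rfl⟩ : ∃ w, M = w + 1 := ⟨M - 1, by omega⟩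
  simp [Finset.sum_range_succ]

/-- The counting function: words of length m with p ups, starting with an up,
ending with `b`, having k interior peaks. -/
noncomputable def cnt (m p k : ℕ) (b : Bool) : ℕ :=
  ((Finset.univ : Finset (Fin m → Bool)).filter
    (fun s => upsTo s m = p ∧ extS s 0 = true ∧ extS s (m-1) = b ∧ interiorPeaks s = k)).card

lemma eq_allTrue {m : ℕ} {s : Fin m → Bool} (h : upsTo s m = m) {j : ℕ} (hj : j < m) :
    extS s j = true := by
  have h1 : ((Finset.range m).filter (fun j => extS s j = true)) = Finset.range m :=
    Finset.eq_of_subset_of_card_le (Finset.filter_subset _ _)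
      (by rw [Finset.card_range]; rw [upsTo] at h; omega)
  have h2 : j ∈ (Finset.range m).filter (fun j => extS s j = true) := by
    rw [h1]; exact Finset.mem_range.2 hj
  exact (Finset.mem_filter.1 h2).2

lemma upsTo_allTrue (m : ℕ) : upsTo (fun _ : Fin m => true) m = m := by
  rw [upsTo, Finset.filter_true_of_mem, Finset.card_range]
  intro j hj
  rw [extS_lt _ (Finset.mem_range.1 hj)]

lemma peaks_allTrue (m : ℕ) : interiorPeaks (fun _ : Fin m => true) = 0 := by
  rw [interiorPeaks, Finset.card_eq_zero, Finset.filter_eq_empty_iff]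
  intro j hj
  have hj1 : j + 1 < m := by have := Finset.mem_range.1 hj; omega
  rw [extS_lt _ hj1]
  simp

lemma cnt_all (p k : ℕ) (hp : 1 ≤ p) : cnt p p k true = if k = 0 then 1 else 0 := by
  have hset : ((Finset.univ : Finset (Fin p → Bool)).filter
      (fun s => upsTo s p = p ∧ extS s 0 = true ∧ extS s (p-1) = true ∧ interiorPeaks s = k))
      = if k = 0 then {fun _ => true} else ∅ := by
    ext s
    simp only [Finset.mem_filter, Finset.mem_univ, true_and]
    constructor
    · rintro ⟨h1, h2, h3, h4⟩
      have hs : s = fun _ => true := by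
        funext i
        have := eq_allTrue h1 i.isLt
        rwa [extS_lt _ i.isLt, Fin.eta] at this
      subst hs
      rw [peaks_allTrue] at h4
      simp [← h4]
    · intro hs
      by_cases hk : k = 0
      · subst hk
        simp only [if_true, eq_self_iff_true, Finset.mem_singleton] at hs
        subst hs
        refine ⟨upsTo_allTrue p, ?_, ?_, peaks_allTrue p⟩
        · rw [extS_lt _ (by omega : 0 < p)]
        · rw [extS_lt _ (by omega : p - 1 < p)]
      · rw [if_neg hk] at hs
        exact absurd hs (Finset.notMem_empty s)
  rw [cnt, hset]
  split <;> simp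

lemma cnt_all_false (m k : ℕ) (hm : 1 ≤ m) : cnt m m k false = 0 := by
  rw [cnt, Finset.card_eq_zero, Finset.filter_eq_empty_iff]
  rintro s - ⟨h1, _, h3, _⟩
  have := eq_allTrue h1 (by omega : m - 1 < m)
  rw [this] at h3
  exact Bool.noConfusion h3

lemma cnt_zero (m k : ℕ) (hm : 1 ≤ m) (b : Bool) : cnt m 0 k b = 0 := by
  rw [cnt, Finset.card_eq_zero, Finset.filter_eq_empty_iff]
  rintro s - ⟨h1, h2, _, _⟩
  rw [upsTo, Finset.card_eq_zero, Finset.filter_eq_empty_iff] at h1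
  exact h1 (Finset.mem_range.2 (show 0 < m by omega)) h2

lemma cnt_peak_zero (m p : ℕ) (b : Bool) (hp : 1 ≤ p) (hpm : p < m) : cnt m p 0 b = 0 := by
  rw [cnt, Finset.card_eq_zero, Finset.filter_eq_empty_iff]
  rintro s - ⟨h1, h2, _, h4⟩
  have hex : ∃ j, j < m ∧ extS s j = false := by
    by_contra hc
    push_neg at hc
    have hall : upsTo s m = m := by
      rw [upsTo, Finset.filter_true_of_mem, Finset.card_range]
      intro j hj
      cases hb : extS s j
      · exact absurd hb (hc j (Finset.mem_range.1 hj))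
      · rfl
    omega
  let j0 := Nat.find hex
  have hj0 : j0 < m ∧ extS s j0 = false := Nat.find_spec hex
  have hj0pos : 0 < j0 := by
    rcases Nat.eq_zero_or_pos j0 with h | h
    · exfalso
      have := hj0.2
      rw [h] at this
      rw [h2] at this
      exact Bool.noConfusion this
    · exact h
  have hmin := Nat.find_min hex (show j0 - 1 < j0 by omega)
  have h5 : extS s (j0 - 1) = true := by
    cases hb : extS s (j0 - 1)
    · exact absurd ⟨by omega, hb⟩ hmin
    · rfl
  have hmem : (j0 - 1) ∈ (Finset.range (m-1)).filter
      (fun j => extS s j = true ∧ extS s (j+1) = false) := by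
    refine Finset.mem_filter.2 ⟨Finset.mem_range.2 (by omega), h5, ?_⟩
    rw [show j0 - 1 + 1 = j0 by omega]
    exact hj0.2
  have hcard : 0 < interiorPeaks s := by
    rw [interiorPeaks]
    exact Finset.card_pos.2 ⟨_, hmem⟩
  omega

lemma ups_split {m : ℕ} (s : Fin (m+1) → Bool) (t : Fin m → Bool)
    (hag : ∀ j, j < m → extS s j = extS t j) :
    upsTo s (m+1) = upsTo t m + (if extS s m = true then 1 else 0) := by
  rw [upsTo_eq_sum, upsTo_eq_sum, Finset.sum_range_succ]
  congr 1
  exact Finset.sum_congr rfl (fun j hj => by rw [hag j (Finset.mem_range.1 hj)])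

lemma peaks_split {m : ℕ} (hm : 1 ≤ m) (s : Fin (m+1) → Bool) (t : Fin m → Bool)
    (hag : ∀ j, j < m → extS s j = extS t j) :
    interiorPeaks s = interiorPeaks t
      + (if extS t (m-1) = true ∧ extS s m = false then 1 else 0) := by
  obtain ⟨w, rfl⟩ : ∃ w, m = w + 1 := ⟨m - 1, by omega⟩
  rw [peaks_eq_sum, peaks_eq_sum]
  simp only [Nat.add_sub_cancel]
  rw [Finset.sum_range_succ]
  congr 1
  · refine Finset.sum_congr rfl (fun j hj => ?_)
    have hj' := Finset.mem_range.1 hj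
    rw [hag j (by omega), hag (j+1) (by omega)]
  · rw [hag w (by omega)]

end Aux

section Aux2

lemma split_lemma (m p k : ℕ) (hm : 1 ≤ m) (b c : Bool) :
    ((Finset.univ : Finset (Fin (m+1) → Bool)).filter
      (fun s => upsTo s (m+1) = p ∧ extS s 0 = true ∧ extS s m = b ∧ extS s (m-1) = c
        ∧ interiorPeaks s = k)).card
    = ((Finset.univ : Finset (Fin m → Bool)).filter
      (fun t => upsTo t m + (if b = true then 1 else 0) = p ∧ extS t 0 = true
        ∧ extS t (m-1) = c
        ∧ interiorPeaks t + (if c = true ∧ b = false then 1 else 0) = k)).card := by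
  refine Finset.card_bij'
    (fun s _ => (fun i : Fin m => s (Fin.castSucc i)))
    (fun t _ => (fun i : Fin (m+1) => if h : (i : ℕ) < m then t ⟨i, h⟩ else b))
    (fun s hs => ?_) (fun t ht => ?_) (fun s hs => ?_) (fun t ht => ?_)
  · -- hi : forward membership
    obtain ⟨-, h1, h2, h3, h4, h5⟩ := Finset.mem_filter.1 hs
    have hag : ∀ j, j < m → extS s j = extS (fun i : Fin m => s (Fin.castSucc i)) j := by
      intro j hj
      rw [extS_lt s (by omega : j < m + 1), extS_lt _ hj]
      rfl
    refine Finset.mem_filter.2 ⟨Finset.mem_univ _, ?_, ?_, ?_, ?_⟩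
    · have hu := ups_split s _ hag
      rw [h3] at hu
      exact hu.symm.trans h1
    · rw [← hag 0 (by omega)]; exact h2
    · rw [← hag (m-1) (by omega)]; exact h4
    · have h4' : extS (fun i : Fin m => s (Fin.castSucc i)) (m-1) = c := by
        rw [← hag (m-1) (by omega)]; exact h4
      have hpk := peaks_split hm s _ hag
      rw [h4', h3] at hpk
      exact hpk.symm.trans h5
  · -- hj : backward membership
    obtain ⟨-, h1, h2, h3, h4⟩ := Finset.mem_filter.1 ht
    have hag : ∀ j, j < m →
        extS (fun i : Fin (m+1) => if h : (i : ℕ) < m then t ⟨i, h⟩ else b) j = extS t j := by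
      intro j hj
      rw [extS_lt _ (by omega : j < m + 1), extS_lt _ hj]
      exact dif_pos hj
    have hlastb : extS (fun i : Fin (m+1) => if h : (i : ℕ) < m then t ⟨i, h⟩ else b) m = b := by
      rw [extS_lt _ (by omega : m < m + 1)]
      exact dif_neg (Nat.lt_irrefl m)
    refine Finset.mem_filter.2 ⟨Finset.mem_univ _, ?_, ?_, hlastb, ?_, ?_⟩
    · have hu := ups_split _ t hag
      rw [hlastb] at hu
      exact hu.trans h1
    · rw [hag 0 (by omega)]; exact h2
    · rw [hag (m-1) (by omega)]; exact h3
    · have hpk := peaks_split hm _ t hag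
      rw [hlastb, h3] at hpk
      exact hpk.trans h4
  · -- left inverse
    dsimp only
    funext x
    by_cases hx : (x : ℕ) < m
    · show (if h : (x : ℕ) < m then s (Fin.castSucc (⟨(x : ℕ), h⟩ : Fin m)) else b) = s x
      exact (dif_pos hx).trans (congrArg s (Fin.ext rfl))
    · obtain ⟨-, h1, h2, h3, h4, h5⟩ := Finset.mem_filter.1 hs
      show (if h : (x : ℕ) < m then s (Fin.castSucc (⟨(x : ℕ), h⟩ : Fin m)) else b) = s x
      have hxm : (x : ℕ) = m := by omega
      rw [extS_lt s (by omega : m < m + 1)] at h3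
      exact (dif_neg hx).trans (h3.symm.trans (congrArg s (Fin.ext hxm.symm)))
  · -- right inverse
    dsimp only
    funext x
    have hx : ((Fin.castSucc x : Fin (m+1)) : ℕ) < m := by
      simpa using x.isLt
    show (if h : ((Fin.castSucc x : Fin (m+1)) : ℕ) < m
        then t ⟨((Fin.castSucc x : Fin (m+1)) : ℕ), h⟩ else b) = t x
    exact (dif_pos hx).trans (congrArg t (Fin.ext (by simp)))

lemma cnt_split (m p k : ℕ) (hm : 1 ≤ m) (b : Bool) :
    cnt (m+1) p k b
    = ((Finset.univ : Finset (Fin (m+1) → Bool)).filter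
        (fun s => upsTo s (m+1) = p ∧ extS s 0 = true ∧ extS s m = b ∧ extS s (m-1) = true
          ∧ interiorPeaks s = k)).card
    + ((Finset.univ : Finset (Fin (m+1) → Bool)).filter
        (fun s => upsTo s (m+1) = p ∧ extS s 0 = true ∧ extS s m = b ∧ extS s (m-1) = false
          ∧ interiorPeaks s = k)).card := by
  rw [cnt]
  simp only [Nat.add_sub_cancel]
  rw [← Finset.card_filter_add_card_filter_not
    (p := fun s : Fin (m+1) → Bool => extS s (m-1) = true)]
  congr 1
  · rw [Finset.filter_filter]
    refine congrArg Finset.card (Finset.filter_congr ?_)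
    intro s _
    constructor
    · rintro ⟨⟨a1, a2, a3, a4⟩, a5⟩; exact ⟨a1, a2, a3, a5, a4⟩
    · rintro ⟨a1, a2, a3, a5, a4⟩; exact ⟨⟨a1, a2, a3, a4⟩, a5⟩
  · rw [Finset.filter_filter]
    refine congrArg Finset.card (Finset.filter_congr ?_)
    intro s _
    simp only [Bool.not_eq_true]
    constructor
    · rintro ⟨⟨a1, a2, a3, a4⟩, a5⟩; exact ⟨a1, a2, a3, a5, a4⟩
    · rintro ⟨a1, a2, a3, a5, a4⟩; exact ⟨⟨a1, a2, a3, a4⟩, a5⟩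

lemma cnt_succ_false (m p k : ℕ) (hm : 1 ≤ m) :
    cnt (m+1) p (k+1) false = cnt m p k true + cnt m p (k+1) false := by
  rw [cnt_split m p (k+1) hm false, split_lemma m p (k+1) hm false true,
    split_lemma m p (k+1) hm false false]
  have e1 : (if (false:Bool) = true then 1 else 0) = 0 := by simp
  have e2 : (if (true:Bool) = true ∧ (false:Bool) = false then (1:ℕ) else 0) = 1 := by simp
  have e3 : (if (false:Bool) = true ∧ (false:Bool) = false then (1:ℕ) else 0) = 0 := by simp
  congr 1
  · rw [cnt]
    refine congrArg Finset.card (Finset.filter_congr ?_)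
    intro t _
    rw [e1, e2]
    simp only [add_zero]
    constructor
    · rintro ⟨a1, a2, a3, a4⟩; exact ⟨a1, a2, a3, by omega⟩
    · rintro ⟨a1, a2, a3, a4⟩; exact ⟨a1, a2, a3, by omega⟩

lemma cnt_succ_true (m p k : ℕ) (hm : 1 ≤ m) :
    cnt (m+1) (p+1) k true = cnt m p k true + cnt m p k false := by
  rw [cnt_split m (p+1) k hm true, split_lemma m (p+1) k hm true true,
    split_lemma m (p+1) k hm true false]
  have e4 : (if (true:Bool) = true then (1:ℕ) else 0) = 1 := by simp
  have e5 : (if (true:Bool) = true ∧ (true:Bool) = false then (1:ℕ) else 0) = 0 := by simp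
  have e6 : (if (false:Bool) = true ∧ (true:Bool) = false then (1:ℕ) else 0) = 0 := by simp
  congr 1
  · rw [cnt]
    refine congrArg Finset.card (Finset.filter_congr ?_)
    intro t _
    rw [e4, e5]
    simp only [add_zero]
    constructor
    · rintro ⟨a1, a2, a3, a4⟩; exact ⟨by omega, a2, a3, a4⟩
    · rintro ⟨a1, a2, a3, a4⟩; exact ⟨by omega, a2, a3, a4⟩
  · rw [cnt]
    refine congrArg Finset.card (Finset.filter_congr ?_)
    intro t _
    rw [e4, e6]
    simp only [add_zero]
    constructor
    · rintro ⟨a1, a2, a3, a4⟩; exact ⟨by omega, a2, a3, a4⟩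
    · rintro ⟨a1, a2, a3, a4⟩; exact ⟨by omega, a2, a3, a4⟩

end Aux2

section Aux3

lemma gh : ∀ m p q k : ℕ, m = p + q → 1 ≤ p →
    ((1 ≤ q → cnt m p (k+1) false = Nat.choose (p-1) k * Nat.choose (q-1) k) ∧
     (1 ≤ q → 1 ≤ k → cnt m p k true = Nat.choose (p-1) k * Nat.choose (q-1) (k-1))) := by
  intro m
  induction m using Nat.strong_induction_on with
  | _ m IH =>
    intro p q k hm hp
    constructor
    · intro hq
      obtain ⟨q', rfl⟩ : ∃ q', q = q' + 1 := ⟨q - 1, by omega⟩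
      subst hm
      rw [show p + (q' + 1) = (p + q') + 1 by omega,
        cnt_succ_false (p + q') p k (by omega)]
      rcases Nat.eq_zero_or_pos q' with hq' | hq'
      · subst hq'
        rw [show p + 0 = p by omega, cnt_all p k hp, cnt_all_false p (k+1) hp]
        rcases k with _ | k <;> simp
      · obtain ⟨q'', rfl⟩ : ∃ q'', q' = q'' + 1 := ⟨q' - 1, by omega⟩
        have hA := (IH (p + (q'' + 1)) (by omega) p (q'' + 1) k rfl hp).1 (by omega)
        rcases Nat.eq_zero_or_pos k with hk | hk
        · subst hk
          rw [cnt_peak_zero (p + (q''+1)) p true hp (by omega), hA]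
          simp
        · obtain ⟨k', rfl⟩ : ∃ k', k = k' + 1 := ⟨k - 1, by omega⟩
          have hB := (IH (p + (q'' + 1)) (by omega) p (q'' + 1) (k' + 1) rfl hp).2
            (by omega) (by omega)
          rw [hA, hB]
          simp only [Nat.add_sub_cancel]
          rw [Nat.choose_succ_succ' q'' k']
          ring
    · intro hq hk
      obtain ⟨k', rfl⟩ : ∃ k', k = k' + 1 := ⟨k - 1, by omega⟩
      obtain ⟨p', rfl⟩ : ∃ p', p = p' + 1 := ⟨p - 1, by omega⟩
      subst hm
      rw [show p' + 1 + q = (p' + q) + 1 by omega,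
        cnt_succ_true (p' + q) p' (k' + 1) (by omega)]
      rcases Nat.eq_zero_or_pos p' with hp' | hp'
      · subst hp'
        rw [show 0 + q = q by omega, cnt_zero q (k'+1) (by omega) true,
          cnt_zero q (k'+1) (by omega) false]
        simp [Nat.choose_eq_zero_of_lt (show 0 < k' + 1 by omega)]
      · have hB := (IH (p' + q) (by omega) p' q (k' + 1) rfl hp').2 hq (by omega)
        have hA := (IH (p' + q) (by omega) p' q k' rfl hp').1 hq
        rw [hB, hA]
        simp only [Nat.add_sub_cancel]
        obtain ⟨p'', rfl⟩ : ∃ p'', p' = p'' + 1 := ⟨p' - 1, by omega⟩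
        simp only [Nat.add_sub_cancel]
        rw [Nat.choose_succ_succ' p'' k']
        ring

lemma extS_F {n : ℕ} (s : Fin (2*n) → Bool) (j : ℕ) :
    extS (fun i : Fin (2*n+2) => if (i : ℕ) = 0 then true else extS s ((i : ℕ) - 1)) (j+1)
      = extS s j := by
  by_cases h : j + 1 < 2*n + 2
  · rw [extS_lt _ h]
    simp
  · rw [extS_ge _ (by omega), extS_ge s (by omega)]

lemma extS_F0 {n : ℕ} (s : Fin (2*n) → Bool) :
    extS (fun i : Fin (2*n+2) => if (i : ℕ) = 0 then true else extS s ((i : ℕ) - 1)) 0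
      = true := by
  rw [extS_lt _ (by omega : 0 < 2*n + 2)]
  simp

lemma key2 {n : ℕ} (hn : 1 ≤ n) (e : Fin (2*n+2) → Bool) (t : Fin (2*n) → Bool)
    (h0 : extS e 0 = true) (hag : ∀ j, extS e (j+1) = extS t j) :
    upsTo e (2*n+2) = upsTo t (2*n) + 1 ∧ interiorPeaks e = bPeaks n t := by
  constructor
  · rw [upsTo_eq_sum, upsTo_eq_sum,
      show Finset.range (2*n+2) = Finset.range ((2*n+1)+1) from congrArg _ (by omega),
      Finset.sum_range_succ']
    simp only [hag, h0]
    rw [Finset.sum_range_succ, extS_ge t (le_refl (2*n))]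
    simp
  · rw [peaks_eq_sum e, bPeaks, peaks_eq_sum t,
      show (2*n+2-1 : ℕ) = 2*n+1 from by omega,
      Finset.sum_range_succ']
    simp only [hag, h0]
    rw [sum_peel_last (show (1:ℕ) ≤ 2*n by omega)]
    simp only [show 2*n-1+1 = 2*n from by omega, extS_ge t (le_refl (2*n)),
      true_and, and_true]
    omega

end Aux3


theorem stmt1 (n v : ℕ) (hn : 1 ≤ n) (hv : v ≤ n - 1) :
    ((Finset.univ : Finset (Fin (2*n) → Bool)).filter
      (fun s => isBilateral n s ∧ bPeaks n s = v + 1)).card = (n.choose v) ^ 2 := by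
  have key := (gh (2*n+2) (n+1) (n+1) v (by ring) (by omega)).1 (by omega)
  simp only [Nat.add_sub_cancel] at key
  have hbij : ((Finset.univ : Finset (Fin (2*n) → Bool)).filter
      (fun s => isBilateral n s ∧ bPeaks n s = v + 1)).card
      = cnt (2*n+2) (n+1) (v+1) false := by
    rw [cnt, show (2*n+2-1 : ℕ) = 2*n+1 from by omega]
    refine Finset.card_bij'
      (fun s _ => (fun i : Fin (2*n+2) => if (i:ℕ) = 0 then true else extS s ((i:ℕ)-1)))
      (fun e _ => (fun i : Fin (2*n) => e ⟨(i:ℕ)+1, by omega⟩))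
      (fun s hs => ?_) (fun e he => ?_) (fun s hs => ?_) (fun e he => ?_)
    · -- forward membership
      obtain ⟨-, h1, h2⟩ := Finset.mem_filter.1 hs
      have h1' : upsTo s (2*n) = n := h1
      have hk := key2 hn _ s (extS_F0 s) (extS_F s)
      refine Finset.mem_filter.2 ⟨Finset.mem_univ _, ?_, extS_F0 s, ?_, ?_⟩
      · rw [hk.1, h1']
      · rw [extS_F s (2*n)]
        exact extS_ge s (le_refl _)
      · rw [hk.2]
        exact h2
    · -- backward membership
      obtain ⟨-, h1, h2, h3, h4⟩ := Finset.mem_filter.1 he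
      have hag : ∀ j, extS e (j+1) = extS (fun i : Fin (2*n) => e ⟨(i:ℕ)+1, by omega⟩) j := by
        intro j
        by_cases hj : j < 2*n
        · rw [extS_lt _ hj, extS_lt e (by omega : j+1 < 2*n+2)]
        · rw [extS_ge _ (by omega : 2*n ≤ j)]
          by_cases hj2 : j = 2*n
          · rw [hj2]; exact h3
          · exact extS_ge e (by omega)
      have hk := key2 hn e _ h2 hag
      refine Finset.mem_filter.2 ⟨Finset.mem_univ _, ?_, ?_⟩
      · show upsTo _ (2*n) = n
        have := hk.1
        omega
      · show bPeaks n _ = v + 1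
        rw [← hk.2]
        exact h4
    · -- left inverse : G (F s) = s
      dsimp only
      funext x
      show (if ((x:ℕ)+1 : ℕ) = 0 then true else extS s ((x:ℕ)+1-1)) = s x
      rw [if_neg (Nat.succ_ne_zero _)]
      simp only [Nat.add_sub_cancel]
      rw [extS_lt s x.isLt, Fin.eta]
    · -- right inverse : F (G e) = e
      obtain ⟨-, h1, h2, h3, h4⟩ := Finset.mem_filter.1 he
      funext x
      show (if (x:ℕ) = 0 then true
          else extS (fun i : Fin (2*n) => e ⟨(i:ℕ)+1, by omega⟩) ((x:ℕ)-1)) = e x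
      by_cases hx : (x:ℕ) = 0
      · rw [if_pos hx]
        rw [extS_lt e (by omega : 0 < 2*n+2)] at h2
        rw [show x = ⟨0, by omega⟩ from Fin.ext hx]
        exact h2.symm
      · rw [if_neg hx]
        by_cases hx2 : (x:ℕ) - 1 < 2*n
        · rw [extS_lt _ hx2]
          show e ⟨(x:ℕ)-1+1, by omega⟩ = e x
          refine congrArg e (Fin.ext ?_)
          show (x:ℕ)-1+1 = (x:ℕ)
          omega
        · rw [extS_ge _ (by omega : 2*n ≤ (x:ℕ)-1)]
          have hxv : (x:ℕ) = 2*n+1 := by have := x.isLt; omega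
          rw [extS_lt e (by omega : 2*n+1 < 2*n+2)] at h3
          rw [show x = ⟨2*n+1, by omega⟩ from Fin.ext hxv]
          exact h3.symm
  rw [hbij, key, pow_two]
end

section
/- There is a bijection between bilateral Dyck paths of length 2n and checkmark pairs of size n, i.e., pairs (s_NW, s_SW) where s_NW ∈ {0,1}^n, s_SW ∈ {0,1}^(n-1), and the number of 1's in s_NW equals the number of 1's in s_SW or exceeds it by exactly one. -/
open Finset
open scoped Classical

/-- Inverse of `phiMap`. -/
def invMap (n : ℕ) (p : (Fin n → Bool) × (Fin (n-1) → Bool)) : Fin (2*n) → Bool :=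
  fun j => if (j : ℕ) % 2 = 0 then ! p.1 ⟨(j:ℕ)/2, by omega⟩
    else if h : (j:ℕ)/2 < n-1 then p.2 ⟨(j:ℕ)/2, h⟩
    else decide (ones p.1 = ones p.2 + 1)

lemma upsTo_split {m : ℕ} (s : Fin m → Bool) (n : ℕ) :
    upsTo s (2*n) = (∑ i ∈ Finset.range n, if extS s (2*i) = true then 1 else 0)
      + ∑ i ∈ Finset.range n, if extS s (2*i+1) = true then 1 else 0 := by
  rw [upsTo_eq_sum]
  induction n with
  | zero => simp
  | succ n ih =>
    have h2 : 2*(n+1) = 2*n + 1 + 1 := by ring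
    rw [h2, Finset.sum_range_succ, Finset.sum_range_succ, ih,
      Finset.sum_range_succ, Finset.sum_range_succ]
    omega

lemma sum_range_pred (f : ℕ → ℕ) {n : ℕ} (hn : 1 ≤ n) :
    ∑ i ∈ Finset.range n, f i = (∑ i ∈ Finset.range (n-1), f i) + f (n-1) := by
  rcases n with _ | m
  · omega
  · simp [Finset.sum_range_succ]

lemma ones_eq_sum {m : ℕ} (f : Fin m → Bool) :
    ones f = ∑ i ∈ Finset.range m, (if extS f i = true then 1 else 0) := by
  simp [ones, upsTo_eq_sum]

lemma ones_phi_fst (n : ℕ) (s : Fin (2*n) → Bool) :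
    ones (phiMap n s).1
      + (∑ i ∈ Finset.range n, if extS s (2*i) = true then 1 else 0) = n := by
  rw [ones_eq_sum, ← Finset.sum_add_distrib]
  have : ∀ i ∈ Finset.range n,
      ((if extS (phiMap n s).1 i = true then 1 else 0)
        + if extS s (2*i) = true then 1 else 0) = 1 := by
    intro i hi
    rw [Finset.mem_range] at hi
    rw [extS_lt _ hi]
    show ((if (! extS s (2*i)) = true then 1 else 0) + _) = 1
    cases extS s (2*i) <;> simp
  rw [Finset.sum_congr rfl this, Finset.sum_const, Finset.card_range, smul_eq_mul, mul_one]

lemma ones_phi_snd (n : ℕ) (s : Fin (2*n) → Bool) :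
    ones (phiMap n s).2
      = ∑ i ∈ Finset.range (n-1), if extS s (2*i+1) = true then 1 else 0 := by
  rw [ones_eq_sum]
  apply Finset.sum_congr rfl
  intro i hi
  rw [Finset.mem_range] at hi
  rw [extS_lt _ hi]
  rfl

lemma key_count_s7 (n : ℕ) (hn : 1 ≤ n) (s : Fin (2*n) → Bool) (hs : isBilateral n s) :
    ones (phiMap n s).1
      = ones (phiMap n s).2 + (if extS s (2*n-1) = true then 1 else 0) := by
  have hsplit := upsTo_split s n
  have h1 := ones_phi_fst n s
  have h2 := ones_phi_snd n s
  have hB : (∑ i ∈ Finset.range n, if extS s (2*i+1) = true then 1 else 0)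
      = (∑ i ∈ Finset.range (n-1), if extS s (2*i+1) = true then 1 else 0)
        + (if extS s (2*n-1) = true then 1 else 0) := by
    rw [sum_range_pred _ hn]
    have e : 2*(n-1)+1 = 2*n-1 := by omega
    rw [e]
  rw [isBilateral] at hs
  omega

lemma invMap_even (n : ℕ) (p : (Fin n → Bool) × (Fin (n-1) → Bool))
    {i : ℕ} (hi : i < n) : extS (invMap n p) (2*i) = ! extS p.1 i := by
  have h2 : 2*i < 2*n := by omega
  rw [extS_lt _ h2, extS_lt _ hi]
  show invMap n p ⟨2*i, h2⟩ = _
  unfold invMap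
  have hm : (2*i) % 2 = 0 := by omega
  have hd : (2*i) / 2 = i := by omega
  simp only [hm, if_pos, hd]

lemma invMap_odd_lt (n : ℕ) (p : (Fin n → Bool) × (Fin (n-1) → Bool))
    {i : ℕ} (hi : i < n - 1) : extS (invMap n p) (2*i+1) = extS p.2 i := by
  have h2 : 2*i+1 < 2*n := by omega
  rw [extS_lt _ h2, extS_lt _ hi]
  show invMap n p ⟨2*i+1, h2⟩ = _
  unfold invMap
  have hm : ¬ ((2*i+1) % 2 = 0) := by omega
  have hd : (2*i+1) / 2 = i := by omega
  simp only [hd, hm, if_false, hi, dif_pos]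

lemma invMap_last (n : ℕ) (hn : 1 ≤ n) (p : (Fin n → Bool) × (Fin (n-1) → Bool)) :
    extS (invMap n p) (2*n-1) = decide (ones p.1 = ones p.2 + 1) := by
  have h2 : 2*n-1 < 2*n := by omega
  rw [extS_lt _ h2]
  show invMap n p ⟨2*n-1, h2⟩ = _
  unfold invMap
  have hm : ¬ ((2*n-1) % 2 = 0) := by omega
  have hd : ¬ ((2*n-1) / 2 < n - 1) := by omega
  simp only [hm, if_false, hd, dif_neg]
  exact dif_neg (fun h => h)

lemma invMap_bilateral (n : ℕ) (p : (Fin n → Bool) × (Fin (n-1) → Bool))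
    (hp : isCheckPair n p) : isBilateral n (invMap n p) := by
  rcases Nat.eq_zero_or_pos n with h0 | hn
  · subst h0; simp [isBilateral, upsTo]
  rw [isBilateral, upsTo_split]
  have hA : (∑ i ∈ Finset.range n, if extS (invMap n p) (2*i) = true then 1 else 0)
      + ones p.1 = n := by
    rw [ones_eq_sum, ← Finset.sum_add_distrib]
    have : ∀ i ∈ Finset.range n,
        ((if extS (invMap n p) (2*i) = true then 1 else 0)
          + if extS p.1 i = true then 1 else 0) = 1 := by
      intro i hi
      rw [Finset.mem_range] at hi
      rw [invMap_even n p hi]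
      cases extS p.1 i <;> simp
    rw [Finset.sum_congr rfl this, Finset.sum_const, Finset.card_range, smul_eq_mul, mul_one]
  have hB : (∑ i ∈ Finset.range n, if extS (invMap n p) (2*i+1) = true then 1 else 0)
      = ones p.2 + (if extS (invMap n p) (2*n-1) = true then 1 else 0) := by
    rw [sum_range_pred _ hn]
    have e1 : 2*(n-1)+1 = 2*n - 1 := by omega
    rw [e1, ones_eq_sum]
    congr 1
    apply Finset.sum_congr rfl
    intro i hi
    rw [Finset.mem_range] at hi
    rw [invMap_odd_lt n p hi]
  have hlast := invMap_last n hn p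
  rw [hB, hlast]
  rcases hp with h | h
  · rw [if_neg (by simp [h])]
    omega
  · rw [if_pos (by simp [h])]
    omega

lemma phi_checkPair (n : ℕ) (s : Fin (2*n) → Bool) (hs : isBilateral n s) :
    isCheckPair n (phiMap n s) := by
  rcases Nat.eq_zero_or_pos n with h0 | hn
  · subst h0; left; simp [ones, upsTo]
  have h := key_count_s7 n hn s hs
  by_cases hl : extS s (2*n-1) = true
  · right; rw [h, if_pos hl]
  · left; rw [h, if_neg hl]; omega

theorem stmt7 (n : ℕ) :
    Nonempty ({s : Fin (2*n) → Bool // isBilateral n s} ≃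
      {p : (Fin n → Bool) × (Fin (n-1) → Bool) // isCheckPair n p}) := by
  refine ⟨{
    toFun := fun s => ⟨phiMap n s.1, phi_checkPair n s.1 s.2⟩
    invFun := fun p => ⟨invMap n p.1, invMap_bilateral n p.1 p.2⟩
    left_inv := ?_
    right_inv := ?_ }⟩
  · rintro ⟨s, hs⟩
    apply Subtype.ext
    funext j
    have hj : (j : ℕ) < 2*n := j.isLt
    have hn : 1 ≤ n := by omega
    show invMap n (phiMap n s) j = s j
    unfold invMap
    by_cases hm : (j : ℕ) % 2 = 0
    · rw [if_pos hm]
      show (! (phiMap n s).1 ⟨(j:ℕ)/2, _⟩) = s j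
      show (! ! extS s (2*((j:ℕ)/2))) = s j
      have : 2*((j:ℕ)/2) = (j : ℕ) := by omega
      rw [this, Bool.not_not, extS_lt s hj]
    · rw [if_neg hm]
      by_cases hd : (j : ℕ)/2 < n - 1
      · rw [dif_pos hd]
        show extS s (2*((j:ℕ)/2)+1) = s j
        have : 2*((j:ℕ)/2)+1 = (j : ℕ) := by omega
        rw [this, extS_lt s hj]
      · rw [dif_neg hd]
        have hj' : (j : ℕ) = 2*n - 1 := by omega
        have hkey := key_count_s7 n hn s hs
        have hsj : extS s (2*n-1) = s j := by
          rw [extS_lt s (show 2*n-1 < 2*n by omega)]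
          congr 1
          exact Fin.ext hj'.symm
        rw [← hsj]
        by_cases hl : extS s (2*n-1) = true
        · rw [hl]
          exact decide_eq_true (by rw [hkey, if_pos hl])
        · rw [Bool.not_eq_true] at hl
          rw [hl]
          exact decide_eq_false (by rw [hkey, if_neg (by simp [hl])]; omega)
  · rintro ⟨p, hp⟩
    apply Subtype.ext
    show phiMap n (invMap n p) = p
    have h1 : (phiMap n (invMap n p)).1 = p.1 := by
      funext i
      show (! extS (invMap n p) (2*(i:ℕ))) = p.1 i
      rw [invMap_even n p i.isLt, Bool.not_not, extS_lt p.1 i.isLt, Fin.eta]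
    have h2 : (phiMap n (invMap n p)).2 = p.2 := by
      funext i
      show extS (invMap n p) (2*(i:ℕ)+1) = p.2 i
      rw [invMap_odd_lt n p i.isLt, extS_lt p.2 i.isLt, Fin.eta]
    exact Prod.ext h1 h2
end
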